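/- arXiv:1407.1594 — 9 statements merged into one kernel-verified Lean document; each statement's English description precedes it below -/
import Mathlib

section
/- Let T > 0 and let Ω be a nonempty bounded subset of ℝ². Let X̄ : ℝ → ℝ → ℝ² → ℝ² be jointly continuous on [0,T] × [0,T] × ℝ². Assume the exit condition: for every x in the closure of Ω there exists t ∈ (0,T) such that X̄(t,0,x) does not belong to the closure of Ω. Then there exist ε > 0, T₀* > 0 and T₁* > 0 such that for every T₀ ∈ (0,T₀*), every T₁ ∈ (0,T₁*) and every x in the closure of Ω, there exists t ∈ [T₀, T − 2T₁] with infDist(X̄(t,T₀,x), Ω) ≥ 2ε. -/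
/-- Lemma 3.1 of the paper: if every point of `closure Ω` exits `closure Ω` under the
continuous flow `Xbar` in time `< T`, then there are `ε, T₀*, T₁* > 0` such that every point
of `closure Ω`, flowed from time `T₀`, is at distance at least `2ε` from `Ω` at some time
`t ∈ [T₀, T - 2T₁]`. -/
theorem stmt_0
    (T : ℝ) (hT : 0 < T)
    (Ω : Set (EuclideanSpace ℝ (Fin 2))) (hne : Ω.Nonempty) (hbdd : Bornology.IsBounded Ω)
    (Xbar : ℝ → ℝ → EuclideanSpace ℝ (Fin 2) → EuclideanSpace ℝ (Fin 2))
    (hcont : ContinuousOn (fun p : ℝ × ℝ × EuclideanSpace ℝ (Fin 2) => Xbar p.1 p.2.1 p.2.2)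
      (Set.Icc 0 T ×ˢ Set.Icc 0 T ×ˢ Set.univ))
    (hexit : ∀ x ∈ closure Ω, ∃ t ∈ Set.Ioo 0 T, Xbar t 0 x ∉ closure Ω) :
    ∃ ε > (0:ℝ), ∃ T₀star > (0:ℝ), ∃ T₁star > (0:ℝ),
      ∀ T₀ ∈ Set.Ioo 0 T₀star, ∀ T₁ ∈ Set.Ioo 0 T₁star, ∀ x ∈ closure Ω,
        ∃ t ∈ Set.Icc T₀ (T - 2*T₁), 2*ε ≤ Metric.infDist (Xbar t T₀ x) Ω := by
  classical
  set K := closure Ω with hK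
  set S : Set (ℝ × ℝ × EuclideanSpace ℝ (Fin 2)) := Set.Icc 0 T ×ˢ Set.Icc 0 T ×ˢ Set.univ
  -- continuity of the infDist of the flow
  have hg : ContinuousOn
      (fun p : ℝ × ℝ × EuclideanSpace ℝ (Fin 2) => Metric.infDist (Xbar p.1 p.2.1 p.2.2) Ω) S :=
    (Metric.continuous_infDist_pt Ω).comp_continuousOn hcont
  -- per-point data
  have key : ∀ x ∈ K, ∃ t δ ε : ℝ, t ∈ Set.Ioo 0 T ∧ 0 < δ ∧ 0 < ε ∧ δ ≤ t ∧ 3*δ ≤ T - t ∧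
      ∀ τ y, 0 ≤ τ → τ < δ → dist y x < δ → 2*ε ≤ Metric.infDist (Xbar t τ y) Ω := by
    intro x hx
    obtain ⟨t, ht, hout⟩ := hexit x hx
    have hcΩ : Metric.infDist (Xbar t 0 x) Ω = Metric.infDist (Xbar t 0 x) K :=
      (Metric.infDist_closure).symm
    have hcpos : 0 < Metric.infDist (Xbar t 0 x) Ω := by
      rw [hcΩ]
      exact (isClosed_closure.notMem_iff_infDist_pos hne.closure).mp hout
    set c := Metric.infDist (Xbar t 0 x) Ω with hc
    have hmemS : ((t, 0, x) : ℝ × ℝ × EuclideanSpace ℝ (Fin 2)) ∈ S := by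
      refine ⟨⟨ht.1.le, ht.2.le⟩, ⟨le_refl 0, hT.le⟩, Set.mem_univ _⟩
    have hcw := (hg (t, 0, x) hmemS)
    have hnhds : {p : ℝ × ℝ × EuclideanSpace ℝ (Fin 2) |
        Metric.infDist (Xbar p.1 p.2.1 p.2.2) Ω > c/2} ∈ nhdsWithin (t, 0, x) S := by
      apply hcw
      exact Ioi_mem_nhds (by linarith)
    rw [Metric.mem_nhdsWithin_iff] at hnhds
    obtain ⟨δ₀, hδ₀, hball⟩ := hnhds
    refine ⟨t, min (min δ₀ t) ((T - t)/3), c/4, ht, ?_, by linarith, ?_, ?_, ?_⟩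
    · exact lt_min (lt_min hδ₀ ht.1) (by linarith [ht.2])
    · exact (min_le_left _ _).trans (min_le_right _ _)
    · have := min_le_right (min δ₀ t) ((T - t)/3); linarith
    · intro τ y hτ0 hτ hy
      have hδt : min (min δ₀ t) ((T - t)/3) ≤ t := (min_le_left _ _).trans (min_le_right _ _)
      have hδδ : min (min δ₀ t) ((T - t)/3) ≤ δ₀ := (min_le_left _ _).trans (min_le_left _ _)
      have hmem : ((t, τ, y) : ℝ × ℝ × EuclideanSpace ℝ (Fin 2)) ∈
          Metric.ball ((t, 0, x) : ℝ × ℝ × EuclideanSpace ℝ (Fin 2)) δ₀ ∩ S := by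
        constructor
        · rw [Metric.mem_ball, Prod.dist_eq, Prod.dist_eq]
          simp only [dist_self]
          have h1 : dist τ (0:ℝ) < δ₀ := by
            rw [Real.dist_eq]; rw [abs_of_nonneg (by linarith)]; linarith
          have h2 : dist y x < δ₀ := by linarith
          exact max_lt hδ₀ (max_lt h1 h2)
        · exact ⟨⟨ht.1.le, ht.2.le⟩, ⟨hτ0, by nlinarith [ht.2]⟩, Set.mem_univ _⟩
      have := hball hmem
      simp only [Set.mem_setOf_eq] at this
      linarith
  choose! t δ ε h1 h2 h3 h4 h5 h6 using key
  -- compactness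
  have hKc : IsCompact K := hbdd.isCompact_closure
  obtain ⟨s, hsK, hscov⟩ := hKc.elim_nhds_subcover (fun x => Metric.ball x (δ x))
    (fun x hx => Metric.ball_mem_nhds x (h2 x hx))
  -- s is nonempty
  have hKne : K.Nonempty := hne.closure
  have hsne : s.Nonempty := by
    obtain ⟨x, hx⟩ := hKne
    obtain ⟨i, hi, _⟩ := Set.mem_iUnion₂.mp (hscov hx)
    exact ⟨i, hi⟩
  set εs := s.inf' hsne (fun i => ε i) with hεs
  set δs := s.inf' hsne (fun i => δ i) with hδs
  have hεspos : 0 < εs := by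
    rw [hεs, Finset.lt_inf'_iff]; exact fun i hi => h3 i (hsK i hi)
  have hδspos : 0 < δs := by
    rw [hδs, Finset.lt_inf'_iff]; exact fun i hi => h2 i (hsK i hi)
  refine ⟨εs, hεspos, δs, hδspos, δs, hδspos, ?_⟩
  intro T₀ hT₀ T₁ hT₁ x hx
  obtain ⟨i, hi, hxball⟩ := Set.mem_iUnion₂.mp (hscov hx)
  have hiK := hsK i hi
  have hδi : δs ≤ δ i := Finset.inf'_le _ hi
  have hεi : εs ≤ ε i := Finset.inf'_le _ hi
  have hT₀δ : T₀ < δ i := lt_of_lt_of_le hT₀.2 hδi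
  have hT₁δ : T₁ < δ i := lt_of_lt_of_le hT₁.2 hδi
  refine ⟨t i, ⟨?_, ?_⟩, ?_⟩
  · linarith [h4 i hiK]
  · linarith [h5 i hiK, h2 i hiK]
  · have := h6 i hiK T₀ x hT₀.1.le hT₀δ (Metric.mem_ball.mp hxball)
    linarith
end

section
/- Let T > 0, L ≥ 0, ε > 0, T₀* > 0, T₁* > 0, let Ω be a nonempty bounded subset of ℝ², and assume: (i) for every t ∈ [0,T] the map ȳ(t,·) : ℝ² → ℝ² is L-Lipschitz; (ii) X̄ and X̂ are flows of ȳ and of ȳ + û in integral form; (iii) there is a measurable g : ℝ → [0,∞) with |û(t,x)| ≤ g(t) for all t ∈ [0,T], x ∈ ℝ², and (∫₀ᵀ g(t)² dt)^{1/2} ≤ T^{−1/2} e^{−LT} ε; (iv) for every T₀ ∈ (0,T₀*), T₁ ∈ (0,T₁*) and x in the closure of Ω there exists t ∈ [T₀, T − 2T₁] with infDist(X̄(t,T₀,x), Ω) ≥ 2ε. Then for every T₀ ∈ (0,T₀*), every T₁ ∈ (0,T₁*) and every x in the closure of Ω, there exists t ∈ [T₀, T − 2T₁] with infDist(X̂(t,T₀,x),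 Ω) ≥ ε. -/
open MeasureTheory

section Aux

open Set

lemma gron_aux_id (K e x : ℝ) : K * gronwallBound 0 K e x + e = e * Real.exp (K * x) := by
  rcases eq_or_ne K 0 with h | h
  · simp [h, gronwallBound_K0]
  · rw [gronwallBound_of_K_ne_0 h]; field_simp; ring

lemma cs_aux (T : ℝ) (hT : 0 < T) (g : ℝ → ℝ) (hg_meas : Measurable g)
    (hg_nonneg : ∀ t, 0 ≤ g t)
    (hg_int : IntervalIntegrable (fun t => (g t)^2) volume 0 T) :
    ∫ t in (0:ℝ)..T, g t ≤ Real.sqrt T * Real.sqrt (∫ t in (0:ℝ)..T, (g t)^2) := by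
  have hsq : IntegrableOn (fun t => (g t)^2) (Ioc 0 T) volume := hg_int.1
  haveI : IsFiniteMeasure (volume.restrict (Ioc (0:ℝ) T)) :=
    ⟨by rw [Measure.restrict_apply_univ]; exact measure_Ioc_lt_top⟩
  have h2 : ENNReal.ofReal (2:ℝ) = 2 := by norm_num [ENNReal.ofReal_ofNat]
  have hmem : MemLp g (ENNReal.ofReal 2) (volume.restrict (Ioc (0:ℝ) T)) := by
    rw [h2, memLp_two_iff_integrable_sq (hg_meas.aestronglyMeasurable)]
    exact hsq
  have hone : MemLp (fun _ : ℝ => (1:ℝ)) (ENNReal.ofReal 2)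
      (volume.restrict (Ioc (0:ℝ) T)) := by
    rw [h2]; exact memLp_const 1
  have hcs := integral_mul_le_Lp_mul_Lq_of_nonneg (μ := volume.restrict (Ioc (0:ℝ) T))
    (p := 2) (q := 2) ⟨by norm_num, by norm_num, by norm_num⟩
    (Filter.Eventually.of_forall (fun t => (zero_le_one : (0:ℝ) ≤ 1)))
    (Filter.Eventually.of_forall hg_nonneg) hone hmem
  simp only [one_mul, Real.one_rpow] at hcs
  have hvol : ∫ (_ : ℝ) in Ioc 0 T, (1:ℝ) = T := by
    simp [Real.volume_Ioc, hT.le]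
  rw [hvol] at hcs
  rw [intervalIntegral.integral_of_le hT.le, intervalIntegral.integral_of_le hT.le]
  calc ∫ a in Ioc (0:ℝ) T, g a ≤ T ^ (1/2:ℝ) * (∫ a in Ioc (0:ℝ) T, g a ^ 2) ^ (1/2:ℝ) := hcs
    _ = Real.sqrt T * Real.sqrt (∫ a in Ioc (0:ℝ) T, g a ^ 2) := by
        rw [Real.sqrt_eq_rpow, Real.sqrt_eq_rpow]
        norm_num

end Aux

/-- Lemma 3.2 of the paper: if the exit property holds for the flow `Xbar` of `ybar`
(with margin `2ε`), and `uhat` is small in `L²(0,T; L∞)` (bounded by `g` with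
`‖g‖_{L²(0,T)} ≤ T^{-1/2} e^{-LT} ε = 2ς`), then the exit property holds for the flow
`Xhat` of `ybar + uhat` with margin `ε`. -/
theorem stmt_1
    (T L ε T₀star T₁star : ℝ)
    (hT : 0 < T) (hL : 0 ≤ L) (hε : 0 < ε) (hT₀star : 0 < T₀star) (hT₁star : 0 < T₁star)
    (Ω : Set (EuclideanSpace ℝ (Fin 2))) (hne : Ω.Nonempty) (hbdd : Bornology.IsBounded Ω)
    (ybar uhat : ℝ → EuclideanSpace ℝ (Fin 2) → EuclideanSpace ℝ (Fin 2))
    (Xbar Xhat : ℝ → ℝ → EuclideanSpace ℝ (Fin 2) → EuclideanSpace ℝ (Fin 2))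
    (hlip : ∀ t ∈ Set.Icc (0:ℝ) T, ∀ x x', ‖ybar t x - ybar t x'‖ ≤ L * ‖x - x'‖)
    (hXbar_cont : ∀ τ ∈ Set.Icc (0:ℝ) T, ∀ x, ContinuousOn (fun r => Xbar r τ x) (Set.Icc 0 T))
    (hXhat_cont : ∀ τ ∈ Set.Icc (0:ℝ) T, ∀ x, ContinuousOn (fun r => Xhat r τ x) (Set.Icc 0 T))
    (hXbar_intble : ∀ τ t : ℝ, 0 ≤ τ → τ ≤ t → t ≤ T → ∀ x,
      IntervalIntegrable (fun r => ybar r (Xbar r τ x)) volume τ t)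
    (hXhat_intble : ∀ τ t : ℝ, 0 ≤ τ → τ ≤ t → t ≤ T → ∀ x,
      IntervalIntegrable (fun r => ybar r (Xhat r τ x) + uhat r (Xhat r τ x)) volume τ t)
    (hXbar_eq : ∀ τ t : ℝ, 0 ≤ τ → τ ≤ t → t ≤ T → ∀ x,
      Xbar t τ x = x + ∫ r in τ..t, ybar r (Xbar r τ x))
    (hXhat_eq : ∀ τ t : ℝ, 0 ≤ τ → τ ≤ t → t ≤ T → ∀ x,
      Xhat t τ x = x + ∫ r in τ..t, (ybar r (Xhat r τ x) + uhat r (Xhat r τ x)))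
    (g : ℝ → ℝ) (hg_meas : Measurable g) (hg_nonneg : ∀ t, 0 ≤ g t)
    (hg_int : IntervalIntegrable (fun t => (g t)^2) volume 0 T)
    (hu_bound : ∀ t ∈ Set.Icc (0:ℝ) T, ∀ x, ‖uhat t x‖ ≤ g t)
    (hg_small : Real.sqrt (∫ t in (0:ℝ)..T, (g t)^2) ≤ (Real.sqrt T)⁻¹ * Real.exp (-(L*T)) * ε)
    (hXbar_exit : ∀ T₀ ∈ Set.Ioo 0 T₀star, ∀ T₁ ∈ Set.Ioo 0 T₁star, ∀ x ∈ closure Ω,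
      ∃ t ∈ Set.Icc T₀ (T - 2*T₁), 2*ε ≤ Metric.infDist (Xbar t T₀ x) Ω) :
    ∀ T₀ ∈ Set.Ioo 0 T₀star, ∀ T₁ ∈ Set.Ioo 0 T₁star, ∀ x ∈ closure Ω,
      ∃ t ∈ Set.Icc T₀ (T - 2*T₁), ε ≤ Metric.infDist (Xhat t T₀ x) Ω := by
  intro T₀ hT₀ T₁ hT₁ x hx
  obtain ⟨t, ht, hexit⟩ := hXbar_exit T₀ hT₀ T₁ hT₁ x hx
  refine ⟨t, ht, ?_⟩
  have hT₀0 : 0 ≤ T₀ := hT₀.1.le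
  have htT : t ≤ T := by linarith [ht.2, hT₁.1]
  have hT₀T : T₀ ≤ T := le_trans ht.1 htT
  have hT₀mem : T₀ ∈ Set.Icc (0:ℝ) T := ⟨hT₀0, hT₀T⟩
  -- g is interval integrable on [0,T]
  have hg_intble : IntervalIntegrable g volume 0 T := by
    refine IntervalIntegrable.mono_fun' (g := fun t => (1 + (g t)^2)/2)
      (((intervalIntegrable_const.add hg_int)).div_const 2) hg_meas.aestronglyMeasurable ?_
    refine Filter.Eventually.of_forall (fun r => ?_)
    show ‖g r‖ ≤ (1 + (g r)^2)/2
    rw [Real.norm_of_nonneg (hg_nonneg r)]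
    nlinarith [hg_nonneg r, sq_nonneg (g r - 1)]
  have hg_sub : ∀ a b : ℝ, 0 ≤ a → a ≤ b → b ≤ T → IntervalIntegrable g volume a b := by
    intro a b ha hab hb
    refine hg_intble.mono_set ?_
    rw [Set.uIcc_of_le hab, Set.uIcc_of_le hT.le]
    exact Set.Icc_subset_Icc ha hb
  -- the distance between the two flows
  set φ : ℝ → ℝ := fun r => ‖Xhat r T₀ x - Xbar r T₀ x‖ with hφdef
  have hφ_cont : ContinuousOn φ (Set.Icc 0 T) :=
    ((hXhat_cont T₀ hT₀mem x).sub (hXbar_cont T₀ hT₀mem x)).norm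
  have hφ_nonneg : ∀ r, 0 ≤ φ r := fun r => norm_nonneg _
  set GT : ℝ := ∫ r in T₀..T, g r with hGTdef
  have hGT_nonneg : 0 ≤ GT :=
    intervalIntegral.integral_nonneg hT₀T (fun r _ => hg_nonneg r)
  -- GT ≤ ε * exp(-(L*T))
  have hGT_le : GT ≤ ε * Real.exp (-(L*T)) := by
    have hsplit : (∫ r in (0:ℝ)..T₀, g r) + (∫ r in T₀..T, g r) = ∫ r in (0:ℝ)..T, g r :=
      intervalIntegral.integral_add_adjacent_intervals (hg_sub 0 T₀ le_rfl hT₀0 hT₀T)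
        (hg_sub T₀ T hT₀0 hT₀T le_rfl)
    have h1 : (0:ℝ) ≤ ∫ r in (0:ℝ)..T₀, g r :=
      intervalIntegral.integral_nonneg hT₀0 (fun r _ => hg_nonneg r)
    have h2 : ∫ r in (0:ℝ)..T, g r ≤ Real.sqrt T * Real.sqrt (∫ t in (0:ℝ)..T, (g t)^2) :=
      cs_aux T hT g hg_meas hg_nonneg hg_int
    have h3 : Real.sqrt T * Real.sqrt (∫ t in (0:ℝ)..T, (g t)^2)
        ≤ Real.sqrt T * ((Real.sqrt T)⁻¹ * Real.exp (-(L*T)) * ε) :=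
      mul_le_mul_of_nonneg_left hg_small (Real.sqrt_nonneg T)
    have hsT : Real.sqrt T ≠ 0 := by positivity
    have h4 : Real.sqrt T * ((Real.sqrt T)⁻¹ * Real.exp (-(L*T)) * ε)
        = ε * Real.exp (-(L*T)) := by field_simp
    linarith
  -- the key estimate:  φ s ≤ L * ∫_{T₀}^s φ + GT  on [T₀, T]
  set ψ : ℝ → ℝ := fun s => ∫ r in T₀..s, φ r with hψdef
  have hφ_int : ∀ s ∈ Set.Icc T₀ T, IntervalIntegrable φ volume T₀ s := by
    intro s hs
    apply ContinuousOn.intervalIntegrable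
    apply hφ_cont.mono
    rw [Set.uIcc_of_le hs.1]
    exact Set.Icc_subset_Icc hT₀0 hs.2
  have hψ_nonneg : ∀ s ∈ Set.Icc T₀ T, 0 ≤ ψ s := fun s hs =>
    intervalIntegral.integral_nonneg hs.1 (fun r _ => hφ_nonneg r)
  have key : ∀ s ∈ Set.Icc T₀ T, φ s ≤ L * ψ s + GT := by
    intro s hs
    have hs0 : 0 ≤ s := le_trans hT₀0 hs.1
    have hdiff : Xhat s T₀ x - Xbar s T₀ x
        = ∫ r in T₀..s, ((ybar r (Xhat r T₀ x) + uhat r (Xhat r T₀ x)) - ybar r (Xbar r T₀ x)) := by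
      rw [hXhat_eq T₀ s hT₀0 hs.1 hs.2 x, hXbar_eq T₀ s hT₀0 hs.1 hs.2 x,
        intervalIntegral.integral_sub (hXhat_intble T₀ s hT₀0 hs.1 hs.2 x)
          (hXbar_intble T₀ s hT₀0 hs.1 hs.2 x)]
      abel
    have hbound_int : IntervalIntegrable (fun r => L * φ r + g r) volume T₀ s :=
      ((hφ_int s hs).const_mul L).add (hg_sub T₀ s hT₀0 hs.1 hs.2)
    have hnorm : φ s ≤ |∫ r in T₀..s, (L * φ r + g r)| := by
      rw [hφdef]
      simp only
      rw [hdiff]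
      refine intervalIntegral.norm_integral_le_abs_of_norm_le ?_ hbound_int
      have hmem : ∀ᵐ r ∂(volume.restrict (Set.uIoc T₀ s)), r ∈ Set.uIoc T₀ s :=
        ae_restrict_mem measurableSet_uIoc
      filter_upwards [hmem] with r hr
      rw [Set.uIoc_of_le hs.1] at hr
      have hrmem : r ∈ Set.Icc (0:ℝ) T := ⟨le_trans hT₀0 hr.1.le, le_trans hr.2 hs.2⟩
      calc ‖(ybar r (Xhat r T₀ x) + uhat r (Xhat r T₀ x)) - ybar r (Xbar r T₀ x)‖
          = ‖(ybar r (Xhat r T₀ x) - ybar r (Xbar r T₀ x)) + uhat r (Xhat r T₀ x)‖ := by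
            congr 1; abel
        _ ≤ ‖ybar r (Xhat r T₀ x) - ybar r (Xbar r T₀ x)‖ + ‖uhat r (Xhat r T₀ x)‖ :=
            norm_add_le _ _
        _ ≤ L * φ r + g r := add_le_add (hlip r hrmem _ _) (hu_bound r hrmem _)
    have habs : |∫ r in T₀..s, (L * φ r + g r)| = ∫ r in T₀..s, (L * φ r + g r) := by
      refine abs_of_nonneg (intervalIntegral.integral_nonneg hs.1 (fun r _ => ?_))
      have := hφ_nonneg r
      have := hg_nonneg r
      positivity
    have hsplit2 : ∫ r in T₀..s, (L * φ r + g r) = L * ψ s + ∫ r in T₀..s, g r := by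
      rw [intervalIntegral.integral_add ((hφ_int s hs).const_mul L) (hg_sub T₀ s hT₀0 hs.1 hs.2),
        intervalIntegral.integral_const_mul]
    have hgs : ∫ r in T₀..s, g r ≤ GT := by
      have : (∫ r in T₀..s, g r) + (∫ r in s..T, g r) = GT :=
        intervalIntegral.integral_add_adjacent_intervals (hg_sub T₀ s hT₀0 hs.1 hs.2)
          (hg_sub s T hs0 hs.2 le_rfl)
      have h0 : (0:ℝ) ≤ ∫ r in s..T, g r :=
        intervalIntegral.integral_nonneg hs.2 (fun r _ => hg_nonneg r)
      linarith
    calc φ s ≤ |∫ r in T₀..s, (L * φ r + g r)| := hnorm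
      _ = L * ψ s + ∫ r in T₀..s, g r := by rw [habs, hsplit2]
      _ ≤ L * ψ s + GT := by linarith
  -- Gronwall
  have hψ_cont : ContinuousOn ψ (Set.Icc T₀ T) := by
    have := intervalIntegral.continuousOn_primitive_interval (a := T₀) (b := T) (f := φ)
      (μ := volume) ?_
    · rwa [Set.uIcc_of_le hT₀T] at this
    · rw [Set.uIcc_of_le hT₀T]
      exact (hφ_cont.mono (Set.Icc_subset_Icc hT₀0 le_rfl)).integrableOn_compact isCompact_Icc
  have hψ_deriv : ∀ s ∈ Set.Ico T₀ T, HasDerivWithinAt ψ (φ s) (Set.Ici s) s := by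
    intro s hs
    have hs0 : (0:ℝ) ≤ s := le_trans hT₀0 hs.1
    have hnhd : Set.Icc (0:ℝ) T ∈ nhdsWithin s (Set.Ici s) := by
      refine mem_nhdsWithin.mpr ⟨Set.Iio T, isOpen_Iio, hs.2, ?_⟩
      rintro r ⟨hr1, hr2⟩
      exact ⟨le_trans hs0 hr2, le_of_lt hr1⟩
    have hnhd' : Set.Icc (0:ℝ) T ∈ nhdsWithin s (Set.Ioi s) :=
      nhdsWithin_mono _ Set.Ioi_subset_Ici_self hnhd
    exact intervalIntegral.integral_hasDerivWithinAt_right (t := Set.Ioi s)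
      (hφ_int s ⟨hs.1, hs.2.le⟩)
      ⟨Set.Icc 0 T, hnhd', hφ_cont.aestronglyMeasurable measurableSet_Icc⟩
      ((hφ_cont s ⟨hs0, hs.2.le⟩).mono_of_mem_nhdsWithin hnhd')
  have hgron := norm_le_gronwallBound_of_norm_deriv_right_le (δ := 0) (K := L) (ε := GT)
    hψ_cont hψ_deriv (by simp [hψdef]) ?_
  swap
  · intro s hs
    rw [Real.norm_of_nonneg (hφ_nonneg s), Real.norm_of_nonneg (hψ_nonneg s ⟨hs.1, hs.2.le⟩)]
    exact key s ⟨hs.1, hs.2.le⟩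
  -- conclude the flow estimate at time t
  have htmem : t ∈ Set.Icc T₀ T := ⟨ht.1, htT⟩
  have hψt := hgron t htmem
  rw [Real.norm_of_nonneg (hψ_nonneg t htmem)] at hψt
  have hφt : φ t ≤ GT * Real.exp (L * (t - T₀)) := by
    calc φ t ≤ L * ψ t + GT := key t htmem
      _ ≤ L * gronwallBound 0 L GT (t - T₀) + GT := by
          have := mul_le_mul_of_nonneg_left hψt hL
          linarith
      _ = GT * Real.exp (L * (t - T₀)) := gron_aux_id L GT (t - T₀)
  have hexp : Real.exp (L * (t - T₀)) ≤ Real.exp (L * T) := by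
    apply Real.exp_le_exp.mpr
    have : t - T₀ ≤ T := by linarith
    nlinarith
  have hφt2 : φ t ≤ ε := by
    calc φ t ≤ GT * Real.exp (L * (t - T₀)) := hφt
      _ ≤ GT * Real.exp (L * T) := mul_le_mul_of_nonneg_left hexp hGT_nonneg
      _ ≤ (ε * Real.exp (-(L*T))) * Real.exp (L * T) :=
          mul_le_mul_of_nonneg_right hGT_le (Real.exp_pos _).le
      _ = ε := by rw [mul_assoc, ← Real.exp_add]; simp
  -- final infDist estimate
  have hinf : Metric.infDist (Xbar t T₀ x) Ω ≤ Metric.infDist (Xhat t T₀ x) Ω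
      + dist (Xbar t T₀ x) (Xhat t T₀ x) := Metric.infDist_le_infDist_add_dist
  have hdist : dist (Xbar t T₀ x) (Xhat t T₀ x) = φ t := by
    rw [dist_eq_norm, hφdef]
    simp only
    rw [← norm_neg]
    congr 1
    abel
  rw [hdist] at hinf
  linarith
end

section
/- Let T > 0 and L ≥ 0. Assume that for every t ∈ [0,T] the map ȳ(t,·) : ℝ² → ℝ² is L-Lipschitz, that g : ℝ → [0,∞) is measurable with ∫₀ᵀ g(r)² dr < ∞ and |û(t,x)| ≤ g(t) for all t ∈ [0,T], x ∈ ℝ², and that X̄ and X̂ are flows of ȳ and of ȳ + û in integral form. Then for all 0 ≤ τ ≤ t ≤ T and all x ∈ ℝ²: |X̂(t,τ,x) − X̄(t,τ,x)| ≤ T^{1/2} · e^{LT} · (∫_τ^t g(r)² dr)^{1/2}. -/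
open MeasureTheory


/-- Integral-form Grönwall inequality. -/
lemma gronwall_integral_form {φ : ℝ → ℝ} {τ t₀ C L : ℝ} (hτ : τ ≤ t₀) (hC : 0 ≤ C)
    (hL : 0 ≤ L) (hφc : ContinuousOn φ (Set.Icc τ t₀))
    (h : ∀ t ∈ Set.Icc τ t₀, φ t ≤ C + L * ∫ r in τ..t, φ r) :
    φ t₀ ≤ C * Real.exp (L * (t₀ - τ)) := by
  rcases hL.eq_or_lt with hL0 | hL0
  · have := h t₀ ⟨hτ, le_rfl⟩
    rw [← hL0] at this ⊢
    simpa using this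
  -- bound M for φ on the compact interval
  obtain ⟨M, hM⟩ : ∃ M, ∀ t ∈ Set.Icc τ t₀, φ t ≤ M := by
    obtain ⟨M, hM⟩ := (isCompact_Icc.image_of_continuousOn hφc).bddAbove
    exact ⟨M, fun t ht => hM ⟨t, ht, rfl⟩⟩
  set M' := M with hM'def
  have hM' : ∀ t ∈ Set.Icc τ t₀, φ t ≤ M' := hM
  have key : ∀ n : ℕ, ∀ t ∈ Set.Icc τ t₀,
      φ t ≤ C * Real.exp (L * (t - τ)) + M' * (L * (t - τ)) ^ n / n.factorial := by
    intro n
    induction n with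
    | zero =>
      intro t ht
      have : (0:ℝ) ≤ C * Real.exp (L * (t - τ)) := by positivity
      simpa using le_add_of_nonneg_of_le this (hM' t ht)
    | succ n ih =>
      intro t ht
      have htτ : τ ≤ t := ht.1
      have htt₀ : t ≤ t₀ := ht.2
      -- integrability of φ on [τ, t]
      have hφi : IntervalIntegrable φ volume τ t :=
        (hφc.mono (Set.Icc_subset_Icc le_rfl htt₀)).intervalIntegrable_of_Icc htτ
      -- antiderivative
      set F : ℝ → ℝ := fun r =>
        C * Real.exp (L * (r - τ)) / L + M' * (L * (r - τ)) ^ (n + 1) / (L * (n + 1).factorial)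
      have hF : ∀ r : ℝ, HasDerivAt F
          (C * Real.exp (L * (r - τ)) + M' * (L * (r - τ)) ^ n / n.factorial) r := by
        intro r
        have h1 : HasDerivAt (fun r : ℝ => L * (r - τ)) L r := by
          simpa using ((hasDerivAt_id r).sub_const τ).const_mul L
        have h2 : HasDerivAt (fun r : ℝ => Real.exp (L * (r - τ))) (Real.exp (L * (r - τ)) * L) r :=
          (Real.hasDerivAt_exp _).comp r h1
        have h3 : HasDerivAt (fun r : ℝ => (L * (r - τ)) ^ (n + 1))
            ((n + 1 : ℕ) * (L * (r - τ)) ^ n * L) r :=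
          (hasDerivAt_pow (n + 1) _).comp r h1
        have := ((h2.const_mul C).div_const L).add
          ((h3.const_mul M').div_const (L * (n + 1).factorial))
        refine this.congr_deriv ?_
        field_simp
        rw [Nat.factorial_succ]
        push_cast
        ring
      have hcont : Continuous (fun r : ℝ =>
          C * Real.exp (L * (r - τ)) + M' * (L * (r - τ)) ^ n / n.factorial) := by
        have h1 : Continuous (fun r : ℝ => L * (r - τ)) :=
          continuous_const.mul (continuous_id.sub continuous_const)
        exact (continuous_const.mul (Real.continuous_exp.comp h1)).add
          ((continuous_const.mul (h1.pow n)).div_const _)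
      have hint : (∫ r in τ..t, (C * Real.exp (L * (r - τ)) + M' * (L * (r - τ)) ^ n / n.factorial))
          = F t - F τ :=
        intervalIntegral.integral_eq_sub_of_hasDerivAt (fun r _ => hF r)
          (hcont.intervalIntegrable τ t)
      have hmono : (∫ r in τ..t, φ r) ≤
          ∫ r in τ..t, (C * Real.exp (L * (r - τ)) + M' * (L * (r - τ)) ^ n / n.factorial) := by
        apply intervalIntegral.integral_mono_on htτ hφi (hcont.intervalIntegrable τ t)
        intro s hs
        exact ih s ⟨hs.1, hs.2.trans htt₀⟩
      have hFτ : F τ = C / L := by simp [F]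
      have hφt := h t ht
      have hLpos : (0:ℝ) < L := hL0
      calc φ t ≤ C + L * ∫ r in τ..t, φ r := hφt
        _ ≤ C + L * (F t - F τ) := by nlinarith [hmono.trans_eq hint]
        _ = C * Real.exp (L * (t - τ)) + M' * (L * (t - τ)) ^ (n + 1) / (n + 1).factorial := by
            simp only [F, hFτ]
            field_simp
            ring
  -- take the limit n → ∞
  have hlim : Filter.Tendsto (fun n : ℕ => C * Real.exp (L * (t₀ - τ))
      + M' * (L * (t₀ - τ)) ^ n / n.factorial) Filter.atTop
      (nhds (C * Real.exp (L * (t₀ - τ)))) := by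
    have h0 : Filter.Tendsto (fun n : ℕ => (L * (t₀ - τ)) ^ n / n.factorial) Filter.atTop
        (nhds 0) := FloorSemiring.tendsto_pow_div_factorial_atTop _
    have := ((h0.const_mul M').const_add (C * Real.exp (L * (t₀ - τ))))
    simpa [mul_div_assoc] using this
  exact ge_of_tendsto hlim (Filter.Eventually.of_forall fun n => key n t₀ ⟨hτ, le_rfl⟩)


lemma integral_le_sqrt_mul_sqrt {g : ℝ → ℝ} {τ t : ℝ} (hτt : τ ≤ t)
    (hg_meas : Measurable g) (hg0 : ∀ r, 0 ≤ g r)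
    (hg2 : IntervalIntegrable (fun r => (g r)^2) volume τ t) :
    ∫ r in τ..t, g r ≤ Real.sqrt (t - τ) * Real.sqrt (∫ r in τ..t, (g r)^2) := by
  set A := ∫ r in τ..t, (g r)^2 with hA
  have hA0 : 0 ≤ A := intervalIntegral.integral_nonneg hτt (fun r _ => sq_nonneg _)
  have hgi : IntervalIntegrable g volume τ t := by
    apply IntervalIntegrable.mono_fun' ((_root_.intervalIntegrable_const (μ := volume) (c := (1:ℝ))).add hg2)
      hg_meas.aestronglyMeasurable.restrict
    refine Filter.Eventually.of_forall fun r => ?_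
    show ‖g r‖ ≤ 1 + (g r)^2
    rw [Real.norm_of_nonneg (hg0 r)]
    nlinarith [sq_nonneg (g r - 1)]
  have key : ∀ ε : ℝ, 0 < ε → (∫ r in τ..t, g r) ≤ ((t - τ) * ε + A / ε) / 2 := by
    intro ε hε
    have hRi : IntervalIntegrable (fun r => (ε + (g r)^2 / ε) / 2) volume τ t :=
      ((_root_.intervalIntegrable_const (μ := volume) (c := ε)).add (hg2.div_const ε)).div_const 2
    have hmono : (∫ r in τ..t, g r) ≤ ∫ r in τ..t, (ε + (g r)^2 / ε) / 2 := by
      apply intervalIntegral.integral_mono_on hτt hgi hRi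
      intro r _
      have h1 : (0:ℝ) ≤ (g r - ε)^2 / ε := div_nonneg (sq_nonneg _) hε.le
      have h2 : (g r - ε)^2 / ε = ε + (g r)^2 / ε - 2 * g r := by
        field_simp; ring
      linarith
    have hval : (∫ r in τ..t, (ε + (g r)^2 / ε) / 2) = ((t - τ) * ε + A / ε) / 2 := by
      rw [intervalIntegral.integral_div,
        intervalIntegral.integral_add (_root_.intervalIntegrable_const (μ := volume) (c := ε)) (hg2.div_const ε),
        intervalIntegral.integral_const, intervalIntegral.integral_div]
      simp [smul_eq_mul, hA]
    linarith [hmono.trans_eq hval]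
  rcases hτt.eq_or_lt with h | hs
  · subst h
    simp only [intervalIntegral.integral_same]
    positivity
  · have hs0 : (0:ℝ) < t - τ := sub_pos.mpr hs
    rcases hA0.eq_or_lt with hA0' | hApos
    · have hle0 : (∫ r in τ..t, g r) ≤ 0 := by
        refine le_of_forall_pos_le_add fun ε hε => ?_
        have := key (2 * ε / (t - τ)) (by positivity)
        rw [← hA0'] at this
        calc (∫ r in τ..t, g r) ≤ ((t - τ) * (2 * ε / (t - τ)) + 0 / (2 * ε / (t - τ))) / 2 :=
              this
          _ = ε := by field_simp; ring
          _ ≤ 0 + ε := by linarith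
      have : (0:ℝ) ≤ Real.sqrt (t - τ) * Real.sqrt A := by positivity
      linarith
    · set ε := Real.sqrt (A / (t - τ)) with hεdef
      have hε : 0 < ε := Real.sqrt_pos.mpr (by positivity)
      have hεeq : ε = Real.sqrt A / Real.sqrt (t - τ) := by
        rw [hεdef, Real.sqrt_div hA0]
      have hss := Real.mul_self_sqrt hs0.le
      have hAA := Real.mul_self_sqrt hA0
      have hst : (0:ℝ) < Real.sqrt (t - τ) := Real.sqrt_pos.mpr hs0
      have hsA : (0:ℝ) < Real.sqrt A := Real.sqrt_pos.mpr hApos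
      have h1 : (t - τ) * ε = Real.sqrt (t - τ) * Real.sqrt A := by
        rw [hεeq]; field_simp; nlinarith [hss]
      have h2 : A / ε = Real.sqrt (t - τ) * Real.sqrt A := by
        rw [hεeq, div_div_eq_mul_div]; field_simp; nlinarith [hAA]
      calc (∫ r in τ..t, g r) ≤ ((t - τ) * ε + A / ε) / 2 := key ε hε
        _ = Real.sqrt (t - τ) * Real.sqrt A := by rw [h1, h2]; ring



/-- The Grönwall comparison estimate (3.5) of the paper: the flows of `ybar` and of
`ybar + uhat` differ by at most `√T e^{LT} (∫_τ^t g²)^{1/2}` when `‖uhat(r,·)‖_{L∞} ≤ g(r)`. -/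
theorem stmt_2
    (T L : ℝ) (hT : 0 < T) (hL : 0 ≤ L)
    (ybar uhat : ℝ → EuclideanSpace ℝ (Fin 2) → EuclideanSpace ℝ (Fin 2))
    (Xbar Xhat : ℝ → ℝ → EuclideanSpace ℝ (Fin 2) → EuclideanSpace ℝ (Fin 2))
    (hlip : ∀ t ∈ Set.Icc (0:ℝ) T, ∀ x x', ‖ybar t x - ybar t x'‖ ≤ L * ‖x - x'‖)
    (g : ℝ → ℝ) (hg_meas : Measurable g) (hg_nonneg : ∀ t, 0 ≤ g t)
    (hg_int : IntervalIntegrable (fun t => (g t)^2) volume 0 T)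
    (hu_bound : ∀ t ∈ Set.Icc (0:ℝ) T, ∀ x, ‖uhat t x‖ ≤ g t)
    (hXbar_cont : ∀ τ ∈ Set.Icc (0:ℝ) T, ∀ x, ContinuousOn (fun r => Xbar r τ x) (Set.Icc 0 T))
    (hXhat_cont : ∀ τ ∈ Set.Icc (0:ℝ) T, ∀ x, ContinuousOn (fun r => Xhat r τ x) (Set.Icc 0 T))
    (hXbar_intble : ∀ τ t : ℝ, 0 ≤ τ → τ ≤ t → t ≤ T → ∀ x,
      IntervalIntegrable (fun r => ybar r (Xbar r τ x)) volume τ t)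
    (hXhat_intble : ∀ τ t : ℝ, 0 ≤ τ → τ ≤ t → t ≤ T → ∀ x,
      IntervalIntegrable (fun r => ybar r (Xhat r τ x) + uhat r (Xhat r τ x)) volume τ t)
    (hXbar_eq : ∀ τ t : ℝ, 0 ≤ τ → τ ≤ t → t ≤ T → ∀ x,
      Xbar t τ x = x + ∫ r in τ..t, ybar r (Xbar r τ x))
    (hXhat_eq : ∀ τ t : ℝ, 0 ≤ τ → τ ≤ t → t ≤ T → ∀ x,
      Xhat t τ x = x + ∫ r in τ..t, (ybar r (Xhat r τ x) + uhat r (Xhat r τ x))) :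
    ∀ τ t : ℝ, 0 ≤ τ → τ ≤ t → t ≤ T → ∀ x,
      ‖Xhat t τ x - Xbar t τ x‖ ≤
        Real.sqrt T * Real.exp (L * T) * Real.sqrt (∫ r in τ..t, (g r)^2) := by
  intro τ t hτ0 hτt htT x
  have hτT : τ ≤ T := hτt.trans htT
  have ht0 : 0 ≤ t := hτ0.trans hτt
  have hτmem : τ ∈ Set.Icc (0:ℝ) T := ⟨hτ0, hτT⟩
  set φ : ℝ → ℝ := fun s => ‖Xhat s τ x - Xbar s τ x‖ with hφdef
  have hsub : Set.Icc τ t ⊆ Set.Icc (0:ℝ) T := Set.Icc_subset_Icc hτ0 htT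
  have hφc : ContinuousOn φ (Set.Icc τ t) :=
    (((hXhat_cont τ hτmem x).sub (hXbar_cont τ hτmem x)).norm).mono hsub
  -- integrability of g on subintervals of [0, T]
  have hgsub : ∀ a b : ℝ, 0 ≤ a → b ≤ T → a ≤ b →
      IntervalIntegrable (fun r => (g r)^2) volume a b := by
    intro a b ha hb hab
    apply hg_int.mono_set
    rw [Set.uIcc_of_le hab, Set.uIcc_of_le hT.le]
    exact Set.Icc_subset_Icc ha hb
  have hgT : IntervalIntegrable g volume 0 T := by
    apply IntervalIntegrable.mono_fun'
      ((_root_.intervalIntegrable_const (μ := volume) (c := (1:ℝ))).add hg_int)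
      hg_meas.aestronglyMeasurable.restrict
    refine Filter.Eventually.of_forall fun r => ?_
    show ‖g r‖ ≤ 1 + (g r)^2
    rw [Real.norm_of_nonneg (hg_nonneg r)]
    nlinarith [sq_nonneg (g r - 1)]
  have hgi : ∀ a b : ℝ, 0 ≤ a → b ≤ T → a ≤ b → IntervalIntegrable g volume a b := by
    intro a b ha hb hab
    apply hgT.mono_set
    rw [Set.uIcc_of_le hab, Set.uIcc_of_le hT.le]
    exact Set.Icc_subset_Icc ha hb
  set C : ℝ := ∫ r in τ..t, g r with hCdef
  have hC0 : 0 ≤ C := intervalIntegral.integral_nonneg hτt fun r _ => hg_nonneg r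
  -- the key integral inequality
  have hkey : ∀ s ∈ Set.Icc τ t, φ s ≤ C + L * ∫ r in τ..s, φ r := by
    intro s hs
    have hsτ : τ ≤ s := hs.1
    have hst : s ≤ t := hs.2
    have hsT : s ≤ T := hst.trans htT
    have h1 := hXhat_intble τ s hτ0 hsτ hsT x
    have h2 := hXbar_intble τ s hτ0 hsτ hsT x
    have e1 : Xhat s τ x - Xbar s τ x =
        ∫ r in τ..s, ((ybar r (Xhat r τ x) + uhat r (Xhat r τ x)) - ybar r (Xbar r τ x)) := by
      rw [hXhat_eq τ s hτ0 hsτ hsT x, hXbar_eq τ s hτ0 hsτ hsT x,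
        intervalIntegral.integral_sub h1 h2]
      abel
    have hφs : IntervalIntegrable φ volume τ s :=
      (hφc.mono (Set.Icc_subset_Icc le_rfl hst)).intervalIntegrable_of_Icc hsτ
    have step1 : φ s ≤ ∫ r in τ..s,
        ‖(ybar r (Xhat r τ x) + uhat r (Xhat r τ x)) - ybar r (Xbar r τ x)‖ := by
      rw [hφdef]
      simp only
      rw [e1]
      exact intervalIntegral.norm_integral_le_integral_norm hsτ
    have step2 : (∫ r in τ..s,
        ‖(ybar r (Xhat r τ x) + uhat r (Xhat r τ x)) - ybar r (Xbar r τ x)‖)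
        ≤ ∫ r in τ..s, (L * φ r + g r) := by
      apply intervalIntegral.integral_mono_on hsτ (h1.sub h2).norm
        ((hφs.const_mul L).add (hgi τ s hτ0 hsT hsτ))
      intro r hr
      have hrT : r ∈ Set.Icc (0:ℝ) T := ⟨hτ0.trans hr.1, hr.2.trans hsT⟩
      have e2 : (ybar r (Xhat r τ x) + uhat r (Xhat r τ x)) - ybar r (Xbar r τ x)
          = (ybar r (Xhat r τ x) - ybar r (Xbar r τ x)) + uhat r (Xhat r τ x) := by abel
      rw [e2]
      calc ‖(ybar r (Xhat r τ x) - ybar r (Xbar r τ x)) + uhat r (Xhat r τ x)‖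
          ≤ ‖ybar r (Xhat r τ x) - ybar r (Xbar r τ x)‖ + ‖uhat r (Xhat r τ x)‖ :=
            norm_add_le _ _
        _ ≤ L * ‖Xhat r τ x - Xbar r τ x‖ + g r :=
            add_le_add (hlip r hrT _ _) (hu_bound r hrT _)
    have step3 : (∫ r in τ..s, (L * φ r + g r))
        = L * (∫ r in τ..s, φ r) + ∫ r in τ..s, g r := by
      rw [intervalIntegral.integral_add (hφs.const_mul L) (hgi τ s hτ0 hsT hsτ),
        intervalIntegral.integral_const_mul]
    have step4 : (∫ r in τ..s, g r) ≤ C := by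
      apply intervalIntegral.integral_mono_interval le_rfl hsτ hst
      · exact Filter.Eventually.of_forall fun r => hg_nonneg r
      · exact hgi τ t hτ0 htT hτt
    calc φ s ≤ ∫ r in τ..s, (L * φ r + g r) := step1.trans step2
      _ = L * (∫ r in τ..s, φ r) + ∫ r in τ..s, g r := step3
      _ ≤ C + L * ∫ r in τ..s, φ r := by linarith
  have hgron := gronwall_integral_form hτt hC0 hL hφc hkey
  -- Cauchy-Schwarz
  have hCS : C ≤ Real.sqrt (t - τ) * Real.sqrt (∫ r in τ..t, (g r)^2) :=
    integral_le_sqrt_mul_sqrt hτt hg_meas hg_nonneg (hgsub τ t hτ0 htT hτt)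
  set A := ∫ r in τ..t, (g r)^2 with hAdef
  have hA0 : 0 ≤ A := intervalIntegral.integral_nonneg hτt fun r _ => sq_nonneg _
  have hsqrt : Real.sqrt (t - τ) ≤ Real.sqrt T :=
    Real.sqrt_le_sqrt (by linarith)
  have hexp : Real.exp (L * (t - τ)) ≤ Real.exp (L * T) :=
    Real.exp_le_exp.mpr (by nlinarith)
  calc φ t ≤ C * Real.exp (L * (t - τ)) := hgron
    _ ≤ (Real.sqrt (t - τ) * Real.sqrt A) * Real.exp (L * (t - τ)) :=
        mul_le_mul_of_nonneg_right hCS (Real.exp_pos _).le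
    _ ≤ (Real.sqrt T * Real.sqrt A) * Real.exp (L * T) := by
        have h1 : (0:ℝ) ≤ Real.sqrt A := Real.sqrt_nonneg _
        have h3 : (0:ℝ) < Real.exp (L * (t - τ)) := Real.exp_pos _
        exact mul_le_mul (mul_le_mul_of_nonneg_right hsqrt h1) hexp h3.le (by positivity)
    _ = Real.sqrt T * Real.exp (L * T) * Real.sqrt A := by ring
end

section
/- Let T > 0, L ≥ 0 and 0 ≤ T₀ ≤ T. Assume that for every t ∈ [0,T] the map ȳ(t,·) : ℝ² → ℝ² is L-Lipschitz, that g : ℝ → [0,∞) is measurable with |û(t,x)| ≤ g(t) for all t ∈ [0,T], x ∈ ℝ², that X̄ and X̂ are flows of ȳ and of ȳ + û in integral form, and that θ : ℝ → ℝ is monotone nondecreasing on [T₀,T] with θ(t) ≥ 0 there, and ∫₀ᵀ θ(r)² g(r)² dr < ∞. Then for all T₀ ≤ t ≤ τ ≤ T and all x ∈ ℝ²: θ(t) · |X̂(τ,t,x) − X̄(τ,t,x)| ≤ T^{1/2} · e^{LT} · (∫_t^τ θ(r)² g(r)² dr)^{1/2}. -/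
open MeasureTheory

set_option maxHeartbeats 1000000 in
/-- The weighted flow-comparison estimate (4.45) of Lemma 4.3 of the paper:
`θ(t) |X̂(τ,t,x) − X̄(τ,t,x)| ≤ √T e^{LT} (∫_t^τ θ² g²)^{1/2}` for `T₀ ≤ t ≤ τ ≤ T`,
where `θ` is nonnegative and nondecreasing on `[T₀, T]`. -/
theorem stmt_3
    (T L T₀ : ℝ) (hT : 0 < T) (hL : 0 ≤ L) (hT₀0 : 0 ≤ T₀) (hT₀T : T₀ ≤ T)
    (ybar uhat : ℝ → EuclideanSpace ℝ (Fin 2) → EuclideanSpace ℝ (Fin 2))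
    (Xbar Xhat : ℝ → ℝ → EuclideanSpace ℝ (Fin 2) → EuclideanSpace ℝ (Fin 2))
    (hlip : ∀ t ∈ Set.Icc (0:ℝ) T, ∀ x x', ‖ybar t x - ybar t x'‖ ≤ L * ‖x - x'‖)
    (g : ℝ → ℝ) (hg_meas : Measurable g) (hg_nonneg : ∀ t, 0 ≤ g t)
    (hu_bound : ∀ t ∈ Set.Icc (0:ℝ) T, ∀ x, ‖uhat t x‖ ≤ g t)
    (hXbar_cont : ∀ τ ∈ Set.Icc (0:ℝ) T, ∀ x, ContinuousOn (fun r => Xbar r τ x) (Set.Icc 0 T))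
    (hXhat_cont : ∀ τ ∈ Set.Icc (0:ℝ) T, ∀ x, ContinuousOn (fun r => Xhat r τ x) (Set.Icc 0 T))
    (hXbar_intble : ∀ τ t : ℝ, 0 ≤ τ → τ ≤ t → t ≤ T → ∀ x,
      IntervalIntegrable (fun r => ybar r (Xbar r τ x)) volume τ t)
    (hXhat_intble : ∀ τ t : ℝ, 0 ≤ τ → τ ≤ t → t ≤ T → ∀ x,
      IntervalIntegrable (fun r => ybar r (Xhat r τ x) + uhat r (Xhat r τ x)) volume τ t)
    (hXbar_eq : ∀ τ t : ℝ, 0 ≤ τ → τ ≤ t → t ≤ T → ∀ x,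
      Xbar t τ x = x + ∫ r in τ..t, ybar r (Xbar r τ x))
    (hXhat_eq : ∀ τ t : ℝ, 0 ≤ τ → τ ≤ t → t ≤ T → ∀ x,
      Xhat t τ x = x + ∫ r in τ..t, (ybar r (Xhat r τ x) + uhat r (Xhat r τ x)))
    (θ : ℝ → ℝ) (hθmono : MonotoneOn θ (Set.Icc T₀ T))
    (hθnonneg : ∀ t ∈ Set.Icc T₀ T, 0 ≤ θ t)
    (hθg_int : IntervalIntegrable (fun r => (θ r)^2 * (g r)^2) volume 0 T) :
    ∀ t τ : ℝ, T₀ ≤ t → t ≤ τ → τ ≤ T → ∀ x,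
      θ t * ‖Xhat τ t x - Xbar τ t x‖ ≤
        Real.sqrt T * Real.exp (L * T) * Real.sqrt (∫ r in t..τ, (θ r)^2 * (g r)^2) := by
  intro t τ ht htτ hτT x
  have h0t : 0 ≤ t := hT₀0.trans ht
  have htT : t ≤ T := htτ.trans hτT
  have htmem : t ∈ Set.Icc T₀ T := ⟨ht, htT⟩
  have hRHSnn : 0 ≤ Real.sqrt T * Real.exp (L * T) *
      Real.sqrt (∫ r in t..τ, (θ r)^2 * (g r)^2) := by positivity
  -- trivial case τ = t
  rcases eq_or_lt_of_le htτ with rfl | htτ'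
  · have hz : Xhat t t x - Xbar t t x = 0 := by
      rw [hXhat_eq t t h0t le_rfl htT x, hXbar_eq t t h0t le_rfl htT x]
      simp
    rw [hz]
    simpa using hRHSnn
  -- trivial case θ t = 0
  rcases (hθnonneg t htmem).eq_or_lt with hθt | hθt
  · rw [← hθt]
    simpa using hRHSnn
  -- main case
  -- the monotone extension of θ
  set θe : ℝ → ℝ := fun s => θ (max T₀ (min s T)) with hθe_def
  have hclmem : ∀ s : ℝ, max T₀ (min s T) ∈ Set.Icc T₀ T := fun s =>
    ⟨le_max_left _ _, max_le hT₀T ((min_le_right _ _))⟩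
  have hθe_mono : Monotone θe := by
    intro a b hab
    exact hθmono (hclmem a) (hclmem b) (max_le_max le_rfl (min_le_min hab le_rfl))
  have hθe_meas : Measurable θe := hθe_mono.measurable
  have hθe_eq : ∀ r ∈ Set.Icc T₀ T, θe r = θ r := by
    intro r hr
    simp only [hθe_def]
    rw [min_eq_left hr.2, max_eq_right hr.1]
  have hθe_nonneg : ∀ r, 0 ≤ θe r := fun r => hθnonneg _ (hclmem r)
  have hmemT : ∀ r ∈ Set.Icc t τ, r ∈ Set.Icc T₀ T := fun r hr =>
    ⟨ht.trans hr.1, hr.2.trans hτT⟩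
  have hθe_ge : ∀ r ∈ Set.Icc t τ, θ t ≤ θe r := by
    intro r hr
    rw [hθe_eq r (hmemT r hr)]
    exact hθmono htmem (hmemT r hr) hr.1
  -- integrability of θ² g² on [t, τ]
  have hF : IntervalIntegrable (fun r => (θ r)^2 * (g r)^2) volume t τ := by
    apply hθg_int.mono_set
    rw [Set.uIcc_of_le htτ, Set.uIcc_of_le hT.le]
    exact Set.Icc_subset_Icc h0t hτT
  have hFe : IntervalIntegrable (fun r => (θe r)^2 * (g r)^2) volume t τ := by
    rw [intervalIntegrable_iff_integrableOn_Ioc_of_le htτ] at hF ⊢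
    refine hF.congr_fun (fun r hr => ?_) measurableSet_Ioc
    rw [hθe_eq r (hmemT r ⟨hr.1.le, hr.2⟩)]
  have hθt2 : 0 < θ t ^ 2 := by positivity
  -- integrability of g on [t, τ]
  have hg_int : IntervalIntegrable g volume t τ := by
    refine IntervalIntegrable.mono_fun'
      (g := fun r => 1 + (θe r)^2 * (g r)^2 / (θ t)^2) ?_ ?_ ?_
    · exact intervalIntegrable_const.add (hFe.div_const _)
    · exact hg_meas.aestronglyMeasurable.restrict
    · rw [Set.uIoc_of_le htτ]
      refine (ae_restrict_iff' measurableSet_Ioc).2 (Filter.Eventually.of_forall ?_)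
      intro r hr
      have hrm : r ∈ Set.Icc t τ := ⟨hr.1.le, hr.2⟩
      have hθr := hθe_ge r hrm
      have hsq : (θ t)^2 ≤ (θe r)^2 := by nlinarith
      have h2 : (g r)^2 ≤ (θe r)^2 * (g r)^2 / (θ t)^2 := by
        rw [le_div_iff₀ hθt2]
        nlinarith [sq_nonneg (g r)]
      have h1 : g r ≤ 1 + (g r)^2 := by nlinarith [sq_nonneg (g r - 1)]
      simp only [Real.norm_eq_abs]
      rw [abs_of_nonneg (hg_nonneg r)]
      linarith
  -- integrability of θe * g on [t, τ]
  have hθeg_int : IntervalIntegrable (fun r => θe r * g r) volume t τ := by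
    refine IntervalIntegrable.mono_fun'
      (g := fun r => (1 + (θe r)^2 * (g r)^2) / 2) ?_ ?_ ?_
    · exact (intervalIntegrable_const.add hFe).div_const _
    · exact (hθe_meas.mul hg_meas).aestronglyMeasurable.restrict
    · refine Filter.Eventually.of_forall (fun r => ?_)
      have h0 : 0 ≤ θe r * g r := mul_nonneg (hθe_nonneg r) (hg_nonneg r)
      simp only [Real.norm_eq_abs]
      rw [abs_of_nonneg h0]
      nlinarith [sq_nonneg (θe r * g r - 1)]
  -- the flows
  have hXc : ContinuousOn (fun r => Xhat r t x - Xbar r t x) (Set.Icc 0 T) :=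
    (hXhat_cont t ⟨h0t, htT⟩ x).sub (hXbar_cont t ⟨h0t, htT⟩ x)
  set φ : ℝ → ℝ := fun s => ‖Xhat (max t (min s τ)) t x - Xbar (max t (min s τ)) t x‖
    with hφ_def
  have hclamp_cont : Continuous (fun s : ℝ => max t (min s τ)) :=
    continuous_const.max (continuous_id.min continuous_const)
  have hclamp_mem : ∀ s : ℝ, max t (min s τ) ∈ Set.Icc 0 T := fun s =>
    ⟨h0t.trans (le_max_left _ _), max_le htT ((min_le_right _ _).trans hτT)⟩
  have hφ_cont : Continuous φ :=
    (hXc.comp_continuous hclamp_cont hclamp_mem).norm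
  have hφ_nonneg : ∀ s, 0 ≤ φ s := fun s => norm_nonneg _
  have hφ_eq : ∀ s ∈ Set.Icc t τ, φ s = ‖Xhat s t x - Xbar s t x‖ := by
    intro s hs
    simp only [hφ_def]
    rw [min_eq_left hs.2, max_eq_right hs.1]
  -- the difference integrand
  have hh_int : ∀ s, t ≤ s → s ≤ τ → IntervalIntegrable
      (fun r => (ybar r (Xhat r t x) + uhat r (Xhat r t x)) - ybar r (Xbar r t x))
      volume t s := fun s h1 h2 =>
    (hXhat_intble t s h0t h1 (h2.trans hτT) x).sub (hXbar_intble t s h0t h1 (h2.trans hτT) x)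
  have hD_eq : ∀ s, t ≤ s → s ≤ τ → Xhat s t x - Xbar s t x =
      ∫ r in t..s, ((ybar r (Xhat r t x) + uhat r (Xhat r t x)) - ybar r (Xbar r t x)) := by
    intro s h1 h2
    rw [hXhat_eq t s h0t h1 (h2.trans hτT) x, hXbar_eq t s h0t h1 (h2.trans hτT) x,
      intervalIntegral.integral_sub (hXhat_intble t s h0t h1 (h2.trans hτT) x)
        (hXbar_intble t s h0t h1 (h2.trans hτT) x)]
    abel
  have hnorm_h : ∀ r ∈ Set.Icc t τ,
      ‖(ybar r (Xhat r t x) + uhat r (Xhat r t x)) - ybar r (Xbar r t x)‖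
        ≤ L * φ r + g r := by
    intro r hr
    have hr0T : r ∈ Set.Icc (0:ℝ) T := ⟨h0t.trans hr.1, hr.2.trans hτT⟩
    have h1 := hlip r hr0T (Xhat r t x) (Xbar r t x)
    have h2 := hu_bound r hr0T (Xhat r t x)
    have hre : (ybar r (Xhat r t x) + uhat r (Xhat r t x)) - ybar r (Xbar r t x)
        = (ybar r (Xhat r t x) - ybar r (Xbar r t x)) + uhat r (Xhat r t x) := by abel
    rw [hre, hφ_eq r hr]
    calc ‖(ybar r (Xhat r t x) - ybar r (Xbar r t x)) + uhat r (Xhat r t x)‖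
        ≤ ‖ybar r (Xhat r t x) - ybar r (Xbar r t x)‖ + ‖uhat r (Xhat r t x)‖ :=
          norm_add_le _ _
      _ ≤ L * ‖Xhat r t x - Xbar r t x‖ + g r := add_le_add h1 h2
  -- key integral inequality
  have hkey : ∀ s ∈ Set.Icc t τ,
      φ s ≤ (∫ r in t..s, g r) + L * ∫ r in t..s, φ r := by
    intro s hs
    have hgs : IntervalIntegrable g volume t s := by
      apply hg_int.mono_set
      rw [Set.uIcc_of_le hs.1, Set.uIcc_of_le htτ]
      exact Set.Icc_subset_Icc le_rfl hs.2
    have hφs : IntervalIntegrable (fun r => L * φ r + g r) volume t s :=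
      ((hφ_cont.intervalIntegrable t s).const_mul L).add hgs
    have hsplit : (∫ r in t..s, (L * φ r + g r))
        = (∫ r in t..s, g r) + L * ∫ r in t..s, φ r := by
      rw [intervalIntegral.integral_add ((hφ_cont.intervalIntegrable t s).const_mul L) hgs,
        intervalIntegral.integral_const_mul]
      ring
    rw [hφ_eq s hs, hD_eq s hs.1 hs.2, ← hsplit]
    calc ‖∫ r in t..s, ((ybar r (Xhat r t x) + uhat r (Xhat r t x)) - ybar r (Xbar r t x))‖
        ≤ ∫ r in t..s, ‖(ybar r (Xhat r t x) + uhat r (Xhat r t x)) - ybar r (Xbar r t x)‖ :=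
          intervalIntegral.norm_integral_le_integral_norm hs.1
      _ ≤ ∫ r in t..s, (L * φ r + g r) := by
          refine intervalIntegral.integral_mono_on hs.1 (hh_int s hs.1 hs.2).norm hφs ?_
          intro r hr
          exact hnorm_h r ⟨hr.1, hr.2.trans hs.2⟩
  -- Gronwall
  set u : ℝ → ℝ := fun s => ∫ r in t..s, φ r with hu_def
  have hu_deriv : ∀ s, HasDerivAt u (φ s) s := fun s =>
    (hφ_cont.integral_hasStrictDerivAt t s).hasDerivAt
  have hu_cont : Continuous u :=
    continuous_iff_continuousAt.2 fun s => (hu_deriv s).continuousAt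
  have hu_nonneg : ∀ s ∈ Set.Icc t τ, 0 ≤ u s := fun s hs =>
    intervalIntegral.integral_nonneg hs.1 (fun r _ => hφ_nonneg r)
  set A : ℝ := ∫ r in t..τ, g r with hA_def
  have hA_nonneg : 0 ≤ A :=
    intervalIntegral.integral_nonneg htτ (fun r _ => hg_nonneg r)
  have hAs_le : ∀ s ∈ Set.Icc t τ, (∫ r in t..s, g r) ≤ A := by
    intro s hs
    have h1 : IntervalIntegrable g volume t s := by
      apply hg_int.mono_set
      rw [Set.uIcc_of_le hs.1, Set.uIcc_of_le htτ]
      exact Set.Icc_subset_Icc le_rfl hs.2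
    have h2 : IntervalIntegrable g volume s τ := by
      apply hg_int.mono_set
      rw [Set.uIcc_of_le hs.2, Set.uIcc_of_le htτ]
      exact Set.Icc_subset_Icc hs.1 le_rfl
    have hadd := intervalIntegral.integral_add_adjacent_intervals h1 h2
    have h3 : 0 ≤ ∫ r in s..τ, g r :=
      intervalIntegral.integral_nonneg hs.2 (fun r _ => hg_nonneg r)
    rw [hA_def]
    linarith [hadd]
  have hgr := norm_le_gronwallBound_of_norm_deriv_right_le (f := u) (f' := φ)
    (δ := 0) (K := L) (ε := A) (a := t) (b := τ)
    hu_cont.continuousOn (fun s _ => (hu_deriv s).hasDerivWithinAt)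
    (by simp [hu_def]) ?_ τ ⟨htτ, le_rfl⟩
  swap
  · intro s hs
    have hsm : s ∈ Set.Icc t τ := ⟨hs.1, hs.2.le⟩
    rw [Real.norm_eq_abs, abs_of_nonneg (hφ_nonneg s),
      Real.norm_eq_abs, abs_of_nonneg (hu_nonneg s hsm)]
    calc φ s ≤ (∫ r in t..s, g r) + L * u s := hkey s hsm
      _ ≤ A + L * u s := by linarith [hAs_le s hsm]
      _ = L * u s + A := by ring
  -- extract: u τ ≤ gronwallBound …
  have huτ : u τ ≤ gronwallBound 0 L A (τ - t) := by
    calc u τ ≤ |u τ| := le_abs_self _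
      _ ≤ gronwallBound 0 L A (τ - t) := by
        rw [← Real.norm_eq_abs]; exact hgr
  have hφτ : φ τ ≤ A * Real.exp (L * T) := by
    have h1 : φ τ ≤ A + L * u τ := by
      have := hkey τ ⟨htτ, le_rfl⟩
      rw [← hA_def] at this
      exact this
    rcases eq_or_lt_of_le hL with hL0 | hL0
    · rw [← hL0] at h1 ⊢
      rw [zero_mul, Real.exp_zero, mul_one]
      linarith
    · have h2 : u τ ≤ A / L * (Real.exp (L * (τ - t)) - 1) := by
        have := huτ
        rw [gronwallBound_of_K_ne_0 hL0.ne'] at this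
        calc u τ ≤ 0 * Real.exp (L * (τ - t)) + A / L * (Real.exp (L * (τ - t)) - 1) := this
          _ = A / L * (Real.exp (L * (τ - t)) - 1) := by ring
      have hexp : Real.exp (L * (τ - t)) ≤ Real.exp (L * T) := by
        apply Real.exp_le_exp.2
        nlinarith
      have h3 : φ τ ≤ A + L * (A / L * (Real.exp (L * (τ - t)) - 1)) := by
        have := mul_le_mul_of_nonneg_left h2 hL0.le
        linarith
      have h4 : A + L * (A / L * (Real.exp (L * (τ - t)) - 1))
          = A * Real.exp (L * (τ - t)) := by field_simp; ring
      rw [h4] at h3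
      calc φ τ ≤ A * Real.exp (L * (τ - t)) := h3
        _ ≤ A * Real.exp (L * T) := mul_le_mul_of_nonneg_left hexp hA_nonneg
  -- weighting step
  set J : ℝ := ∫ r in t..τ, θe r * g r with hJ_def
  set I : ℝ := ∫ r in t..τ, (θ r)^2 * (g r)^2 with hI_def
  have hstep2 : θ t * A ≤ J := by
    have heq : θ t * A = ∫ r in t..τ, θ t * g r := by
      rw [hA_def, intervalIntegral.integral_const_mul]
    rw [heq, hJ_def]
    refine intervalIntegral.integral_mono_on htτ (hg_int.const_mul _) hθeg_int ?_
    intro r hr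
    exact mul_le_mul_of_nonneg_right (hθe_ge r hr) (hg_nonneg r)
  have hJ_nonneg : 0 ≤ J :=
    intervalIntegral.integral_nonneg htτ
      (fun r _ => mul_nonneg (hθe_nonneg r) (hg_nonneg r))
  have hI_nonneg : 0 ≤ I :=
    intervalIntegral.integral_nonneg htτ (fun r _ => by positivity)
  have hIe : (∫ r in t..τ, (θe r)^2 * (g r)^2) = I := by
    rw [hI_def]
    refine intervalIntegral.integral_congr (fun r hr => ?_)
    rw [Set.uIcc_of_le htτ] at hr
    rw [hθe_eq r (hmemT r hr)]
  -- Cauchy–Schwarz via the elementary AM–GM trick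
  have hCS : ∀ c : ℝ, 0 < c → J ≤ (c * (τ - t) + I / c) / 2 := by
    intro c hc
    have hpt : ∀ r ∈ Set.Icc t τ, θe r * g r ≤ (c + (θe r)^2 * (g r)^2 / c) / 2 := by
      intro r _
      have hmp : (θe r)^2 * (g r)^2 = (θe r * g r)^2 := by ring
      rw [hmp]
      have hkey : (c + (θe r * g r)^2 / c) - θe r * g r * 2 = (θe r * g r - c)^2 / c := by
        field_simp
        ring
      have h0 : 0 ≤ (θe r * g r - c)^2 / c := by positivity
      linarith
    have hint : IntervalIntegrable (fun r => (c + (θe r)^2 * (g r)^2 / c) / 2) volume t τ :=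
      (intervalIntegrable_const.add (hFe.div_const c)).div_const 2
    have h1 : J ≤ ∫ r in t..τ, (c + (θe r)^2 * (g r)^2 / c) / 2 :=
      intervalIntegral.integral_mono_on htτ hθeg_int hint hpt
    have h2 : (∫ r in t..τ, (c + (θe r)^2 * (g r)^2 / c) / 2)
        = (c * (τ - t) + I / c) / 2 := by
      rw [intervalIntegral.integral_div, intervalIntegral.integral_add
        intervalIntegrable_const (hFe.div_const c), intervalIntegral.integral_div,
        intervalIntegral.integral_const, hIe]
      simp [mul_comm]
    linarith [h1, h2.symm.le]
  have hJle : J ≤ Real.sqrt T * Real.sqrt I := by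
    rcases eq_or_lt_of_le hI_nonneg with hI0 | hI0
    · have hJ0 : J ≤ 0 := by
        refine le_of_forall_pos_le_add ?_
        intro ε hε
        have hτt : 0 < τ - t := sub_pos.2 htτ'
        have hc : 0 < 2 * ε / (τ - t) := by positivity
        have := hCS _ hc
        rw [← hI0] at this
        have heq : (2 * ε / (τ - t) * (τ - t) + 0 / (2 * ε / (τ - t))) / 2 = ε := by
          field_simp
          ring
        rw [heq] at this
        linarith
      have : 0 ≤ Real.sqrt T * Real.sqrt I := by positivity
      linarith
    · have hτt : 0 < τ - t := sub_pos.2 htτ'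
      set c : ℝ := Real.sqrt (I / (τ - t)) with hc_def
      have hcpos : 0 < c := Real.sqrt_pos.2 (by positivity)
      have hc2 : c ^ 2 = I / (τ - t) := Real.sq_sqrt (by positivity)
      have hI_eq : I = c ^ 2 * (τ - t) := by
        rw [hc2]; field_simp
      have hIc : I / c = c * (τ - t) := by
        rw [hI_eq]; field_simp
      have h1 := hCS c hcpos
      rw [hIc] at h1
      have h2 : J ≤ c * (τ - t) := by linarith
      have h3 : c * (τ - t) = Real.sqrt (τ - t) * Real.sqrt I := by
        rw [hc_def, ← Real.sqrt_sq hτt.le, ← Real.sqrt_mul (by positivity),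
          ← Real.sqrt_mul (by positivity)]
        congr 1
        rw [Real.sqrt_sq hτt.le, div_mul_eq_mul_div, div_eq_iff hτt.ne']
        ring
      have h4 : Real.sqrt (τ - t) * Real.sqrt I ≤ Real.sqrt T * Real.sqrt I := by
        have : Real.sqrt (τ - t) ≤ Real.sqrt T := Real.sqrt_le_sqrt (by linarith)
        exact mul_le_mul_of_nonneg_right this (Real.sqrt_nonneg _)
      linarith [h2, h3.le, h3.ge]
  -- final assembly
  have hfin : ‖Xhat τ t x - Xbar τ t x‖ = φ τ := (hφ_eq τ ⟨htτ, le_rfl⟩).symm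
  rw [hfin]
  calc θ t * φ τ ≤ θ t * (A * Real.exp (L * T)) :=
        mul_le_mul_of_nonneg_left hφτ hθt.le
    _ = (θ t * A) * Real.exp (L * T) := by ring
    _ ≤ J * Real.exp (L * T) :=
        mul_le_mul_of_nonneg_right hstep2 (Real.exp_pos _).le
    _ ≤ (Real.sqrt T * Real.sqrt I) * Real.exp (L * T) :=
        mul_le_mul_of_nonneg_right hJle (Real.exp_pos _).le
    _ = Real.sqrt T * Real.exp (L * T) * Real.sqrt I := by ring
end

section
/- Adopt the Carleman weight setup, and let 0 ≤ T' ≤ T. Assume in addition that θ is monotone nonincreasing on [0,T'] and that 1 ≤ θ(t) ≤ 2 for all t ∈ [0,T']. Let δ ≥ 0, let 0 ≤ τ ≤ t ≤ T' and x ∈ ℝ² be such that |X̂(τ,t,x) − X̄(τ,t,x)| ≤ δ. Then φ(t,x) − φ(τ, X̂(τ,t,x)) ≤ 2 · λ · K · exp(λ(6m+1)) · δ. -/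
/-- The Carleman weight `φ(t,x) = θ(t)(λ e^{6λ(m+1)} − e^{λψ(t,x)})`. -/
noncomputable def phiW (θ : ℝ → ℝ) (ψ : ℝ → EuclideanSpace ℝ (Fin 2) → ℝ) (m lam t : ℝ)
    (x : EuclideanSpace ℝ (Fin 2)) : ℝ :=
  θ t * (lam * Real.exp (6*lam*(m+1)) - Real.exp (lam * ψ t x))

/-- Estimate (4.48) in item 1 of Lemma 4.4 of the paper, with explicit constants:
for `0 ≤ τ ≤ t ≤ T'` (where `θ` is nonincreasing and valued in `[1,2]` on `[0,T']`),
`φ(t,x) − φ(τ, X̂(τ,t,x)) ≤ 2 λ K e^{λ(6m+1)} δ` whenever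
`|X̂(τ,t,x) − X̄(τ,t,x)| ≤ δ`. -/
theorem stmt_6
    (T m lam K : ℝ) (hT : 0 < T) (hm : 1 ≤ m) (hlam : 1 ≤ lam) (hK : 0 ≤ K)
    (θ : ℝ → ℝ) (hθ1 : ∀ t ∈ Set.Icc (0:ℝ) T, 1 ≤ θ t)
    (ψ : ℝ → EuclideanSpace ℝ (Fin 2) → ℝ)
    (hψlb : ∀ t ∈ Set.Icc (0:ℝ) T, ∀ x, 6*m ≤ ψ t x)
    (hψub : ∀ t ∈ Set.Icc (0:ℝ) T, ∀ x, ψ t x ≤ 6*m + 1)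
    (hψlip : ∀ t ∈ Set.Icc (0:ℝ) T, ∀ x x', |ψ t x - ψ t x'| ≤ K * ‖x - x'‖)
    (Xbar Xhat : ℝ → ℝ → EuclideanSpace ℝ (Fin 2) → EuclideanSpace ℝ (Fin 2))
    (htransport : ∀ t ∈ Set.Icc (0:ℝ) T, ∀ τ ∈ Set.Icc (0:ℝ) T, ∀ x,
      ψ τ (Xbar τ t x) = ψ t x)
    (T' : ℝ) (hT'0 : 0 ≤ T') (hT'T : T' ≤ T)
    (hθanti : AntitoneOn θ (Set.Icc 0 T'))
    (hθ12 : ∀ t ∈ Set.Icc (0:ℝ) T', 1 ≤ θ t ∧ θ t ≤ 2)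
    (δ : ℝ) (hδ : 0 ≤ δ)
    (τ t : ℝ) (hτ0 : 0 ≤ τ) (hτt : τ ≤ t) (htT' : t ≤ T')
    (x : EuclideanSpace ℝ (Fin 2))
    (hclose : ‖Xhat τ t x - Xbar τ t x‖ ≤ δ) :
    phiW θ ψ m lam t x - phiW θ ψ m lam τ (Xhat τ t x)
      ≤ 2 * lam * K * Real.exp (lam*(6*m+1)) * δ := by

  have hτT' : τ ∈ Set.Icc (0:ℝ) T' := ⟨hτ0, hτt.trans htT'⟩
  have htT'' : t ∈ Set.Icc (0:ℝ) T' := ⟨hτ0.trans hτt, htT'⟩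
  have hτT : τ ∈ Set.Icc (0:ℝ) T := ⟨hτ0, (hτt.trans htT').trans hT'T⟩
  have htTm : t ∈ Set.Icc (0:ℝ) T := ⟨hτ0.trans hτt, htT'.trans hT'T⟩
  have hlam0 : (0:ℝ) < lam := lt_of_lt_of_le one_pos hlam
  set a := lam * ψ τ (Xhat τ t x) with ha
  set b := lam * ψ t x with hb
  have haM : a ≤ lam * (6*m+1) :=
    mul_le_mul_of_nonneg_left (hψub τ hτT _) hlam0.le
  have hΛ : Real.exp a ≤ lam * Real.exp (6*lam*(m+1)) := by
    have h2 : lam*(6*m+1) ≤ 6*lam*(m+1) := by nlinarith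
    calc Real.exp a ≤ Real.exp (6*lam*(m+1)) := Real.exp_le_exp.mpr (haM.trans h2)
      _ ≤ lam * Real.exp (6*lam*(m+1)) := le_mul_of_one_le_left (Real.exp_pos _).le hlam
  have hθτt : θ t ≤ θ τ := hθanti hτT' htT'' hτt
  have hθt1 : 1 ≤ θ t := (hθ12 t htT'').1
  have hθt2 : θ t ≤ 2 := (hθ12 t htT'').2
  -- a - b bound
  have htr : ψ τ (Xbar τ t x) = ψ t x := htransport t htTm τ hτT x
  have hab : a - b ≤ lam * (K * δ) := by
    have h1 : |ψ τ (Xhat τ t x) - ψ τ (Xbar τ t x)| ≤ K * ‖Xhat τ t x - Xbar τ t x‖ :=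
      hψlip τ hτT _ _
    have h2 : K * ‖Xhat τ t x - Xbar τ t x‖ ≤ K * δ :=
      mul_le_mul_of_nonneg_left hclose hK
    have h3 : ψ τ (Xhat τ t x) - ψ t x ≤ K * δ := by
      rw [← htr]
      exact (le_abs_self _).trans (h1.trans h2)
    calc a - b = lam * (ψ τ (Xhat τ t x) - ψ t x) := by rw [ha, hb]; ring
      _ ≤ lam * (K * δ) := mul_le_mul_of_nonneg_left h3 hlam0.le
  -- exponential bound
  have hexpmul : Real.exp a * Real.exp (b - a) = Real.exp b := by
    rw [← Real.exp_add]; ring_nf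
  have hkey : Real.exp a - Real.exp b ≤ Real.exp (lam*(6*m+1)) * (lam * (K * δ)) := by
    have h1 : Real.exp a * ((b - a) + 1) ≤ Real.exp b := by
      calc Real.exp a * ((b - a) + 1) ≤ Real.exp a * Real.exp (b - a) :=
            mul_le_mul_of_nonneg_left (Real.add_one_le_exp _) (Real.exp_pos a).le
        _ = Real.exp b := hexpmul
    have h2 : Real.exp a - Real.exp b ≤ Real.exp a * (a - b) := by nlinarith
    have h3 : Real.exp a * (a - b) ≤ Real.exp (lam*(6*m+1)) * (lam * (K * δ)) := by
      rcases le_or_gt (a - b) 0 with h | h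
      · have : Real.exp a * (a - b) ≤ 0 := mul_nonpos_of_nonneg_of_nonpos (Real.exp_pos a).le h
        exact this.trans (by positivity)
      · exact mul_le_mul (Real.exp_le_exp.mpr haM) hab h.le (Real.exp_pos _).le
    exact h2.trans h3
  -- conclude
  have hexpand : phiW θ ψ m lam t x - phiW θ ψ m lam τ (Xhat τ t x)
      = θ t * (lam * Real.exp (6*lam*(m+1)) - Real.exp b)
        - θ τ * (lam * Real.exp (6*lam*(m+1)) - Real.exp a) := by
    simp [phiW, ha, hb]
  rw [hexpand]
  have hnn : 0 ≤ lam * Real.exp (6*lam*(m+1)) - Real.exp a := sub_nonneg.mpr hΛ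
  have step1 : θ t * (lam * Real.exp (6*lam*(m+1)) - Real.exp a)
      ≤ θ τ * (lam * Real.exp (6*lam*(m+1)) - Real.exp a) :=
    mul_le_mul_of_nonneg_right hθτt hnn
  have step2 : θ t * (Real.exp a - Real.exp b) ≤ 2 * (Real.exp (lam*(6*m+1)) * (lam * (K * δ))) := by
    have he : 0 ≤ Real.exp a - Real.exp b → True := fun _ => trivial
    rcases le_or_gt (Real.exp a - Real.exp b) 0 with h | h
    · have : θ t * (Real.exp a - Real.exp b) ≤ 0 :=
        mul_nonpos_of_nonneg_of_nonpos (by linarith) h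
      exact this.trans (by positivity)
    · calc θ t * (Real.exp a - Real.exp b) ≤ 2 * (Real.exp a - Real.exp b) :=
            mul_le_mul_of_nonneg_right hθt2 h.le
        _ ≤ 2 * (Real.exp (lam*(6*m+1)) * (lam * (K * δ))) := by linarith
  nlinarith [step1, step2]
end

section
/- Adopt the Carleman weight setup, and let 0 ≤ T₀ ≤ T. Assume in addition that θ is monotone nondecreasing on [T₀,T]. Let δ ≥ 0, let T₀ ≤ t ≤ τ ≤ T and x ∈ ℝ² be such that θ(t) · |X̂(τ,t,x) − X̄(τ,t,x)| ≤ δ. Then φ(t,x) − φ(τ, X̂(τ,t,x)) ≤ λ · K · exp(λ(6m+1)) · δ − (λ · exp(6λ(m+1)) − exp(λ(6m+1))) · (θ(τ) − θ(t)). -/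
lemma exp_sub_exp_le (a b c : ℝ) (ha : a ≤ c) (hb : b ≤ c) :
    Real.exp a - Real.exp b ≤ Real.exp c * |a - b| := by
  rcases le_total b a with h | h
  · have h1 : Real.exp (b - a) ≥ 1 + (b - a) := by
      have := Real.add_one_le_exp (b - a); linarith
    have h2 : Real.exp a - Real.exp b ≤ Real.exp a * (a - b) := by
      have hmul : Real.exp b = Real.exp (b - a) * Real.exp a := by
        rw [← Real.exp_add]; ring_nf
      nlinarith [Real.exp_pos a]
    have h3 : Real.exp a ≤ Real.exp c := Real.exp_le_exp.2 ha
    have habs : |a - b| = a - b := abs_of_nonneg (by linarith)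
    nlinarith [Real.exp_pos c]
  · have : Real.exp a - Real.exp b ≤ 0 := by
      have := Real.exp_le_exp.2 h; linarith
    have := mul_nonneg (Real.exp_pos c).le (abs_nonneg (a - b))
    linarith
/-- Estimate (4.50) in item 2 of Lemma 4.4 of the paper, with explicit constant
`c₃ = λ e^{6λ(m+1)} − e^{λ(6m+1)}`: for `T₀ ≤ t ≤ τ ≤ T` (with `θ` nondecreasing on `[T₀,T]`),
`φ(t,x) − φ(τ, X̂(τ,t,x)) ≤ λ K e^{λ(6m+1)} δ − c₃ (θ(τ) − θ(t))` whenever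
`θ(t) |X̂(τ,t,x) − X̄(τ,t,x)| ≤ δ`. -/
theorem stmt_8
    (T m lam K : ℝ) (hT : 0 < T) (hm : 1 ≤ m) (hlam : 1 ≤ lam) (hK : 0 ≤ K)
    (θ : ℝ → ℝ) (hθ1 : ∀ t ∈ Set.Icc (0:ℝ) T, 1 ≤ θ t)
    (ψ : ℝ → EuclideanSpace ℝ (Fin 2) → ℝ)
    (hψlb : ∀ t ∈ Set.Icc (0:ℝ) T, ∀ x, 6*m ≤ ψ t x)
    (hψub : ∀ t ∈ Set.Icc (0:ℝ) T, ∀ x, ψ t x ≤ 6*m + 1)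
    (hψlip : ∀ t ∈ Set.Icc (0:ℝ) T, ∀ x x', |ψ t x - ψ t x'| ≤ K * ‖x - x'‖)
    (Xbar Xhat : ℝ → ℝ → EuclideanSpace ℝ (Fin 2) → EuclideanSpace ℝ (Fin 2))
    (htransport : ∀ t ∈ Set.Icc (0:ℝ) T, ∀ τ ∈ Set.Icc (0:ℝ) T, ∀ x,
      ψ τ (Xbar τ t x) = ψ t x)
    (T₀ : ℝ) (hT₀0 : 0 ≤ T₀) (hT₀T : T₀ ≤ T)
    (hθmono : MonotoneOn θ (Set.Icc T₀ T))
    (δ : ℝ) (hδ : 0 ≤ δ)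
    (t τ : ℝ) (hT₀t : T₀ ≤ t) (htτ : t ≤ τ) (hτT : τ ≤ T)
    (x : EuclideanSpace ℝ (Fin 2))
    (hclose : θ t * ‖Xhat τ t x - Xbar τ t x‖ ≤ δ) :
    phiW θ ψ m lam t x - phiW θ ψ m lam τ (Xhat τ t x)
      ≤ lam * K * Real.exp (lam*(6*m+1)) * δ
        - (lam * Real.exp (6*lam*(m+1)) - Real.exp (lam*(6*m+1))) * (θ τ - θ t) := by
  have ht0 : (0:ℝ) ≤ t := le_trans hT₀0 hT₀t
  have htI : t ∈ Set.Icc (0:ℝ) T := ⟨ht0, le_trans htτ hτT⟩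
  have hτI : τ ∈ Set.Icc (0:ℝ) T := ⟨le_trans ht0 htτ, hτT⟩
  have hθt : 1 ≤ θ t := hθ1 t htI
  have hθle : θ t ≤ θ τ := hθmono ⟨hT₀t, le_trans htτ hτT⟩ ⟨le_trans hT₀t htτ, hτT⟩ htτ
  set a := lam * ψ τ (Xhat τ t x) with ha
  set b := lam * ψ τ (Xbar τ t x) with hb
  have hlam0 : (0:ℝ) ≤ lam := le_trans zero_le_one hlam
  have hac : a ≤ lam * (6*m+1) := mul_le_mul_of_nonneg_left (hψub τ hτI _) hlam0
  have hbc : b ≤ lam * (6*m+1) := mul_le_mul_of_nonneg_left (hψub τ hτI _) hlam0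
  have hkey := exp_sub_exp_le a b (lam * (6*m+1)) hac hbc
  have habs : |a - b| ≤ lam * (K * ‖Xhat τ t x - Xbar τ t x‖) := by
    have : |a - b| = lam * |ψ τ (Xhat τ t x) - ψ τ (Xbar τ t x)| := by
      rw [ha, hb, ← mul_sub, abs_mul, abs_of_nonneg hlam0]
    rw [this]
    exact mul_le_mul_of_nonneg_left (hψlip τ hτI _ _) hlam0
  have hnorm0 : (0:ℝ) ≤ ‖Xhat τ t x - Xbar τ t x‖ := norm_nonneg _
  have hexpC : (0:ℝ) < Real.exp (lam * (6*m+1)) := Real.exp_pos _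
  have h1 : θ t * (Real.exp a - Real.exp b)
      ≤ lam * K * Real.exp (lam*(6*m+1)) * δ := by
    have step : Real.exp a - Real.exp b
        ≤ Real.exp (lam * (6*m+1)) * (lam * (K * ‖Xhat τ t x - Xbar τ t x‖)) := by
      refine le_trans hkey (mul_le_mul_of_nonneg_left habs hexpC.le)
    have hθt0 : (0:ℝ) ≤ θ t := by linarith
    have := mul_le_mul_of_nonneg_left step hθt0
    nlinarith [mul_le_mul_of_nonneg_left hclose
      (mul_nonneg (mul_nonneg hlam0 hK) hexpC.le)]
  have htrans : ψ τ (Xbar τ t x) = ψ t x := htransport t htI τ hτI x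
  have hea : Real.exp a ≤ Real.exp (lam*(6*m+1)) := Real.exp_le_exp.2 hac
  have hdiff : 0 ≤ θ τ - θ t := by linarith
  simp only [phiW, ← htrans, ← ha, ← hb]
  nlinarith [mul_le_mul_of_nonneg_left hea hdiff]
end

section
/- Adopt the Carleman weight setup, let 0 ≤ T₀ ≤ T, and assume in addition that θ is monotone nondecreasing on [T₀,T]. Set c₃ := λ · exp(6λ(m+1)) − exp(λ(6m+1)) and ℵ(t,x) := ξ(t,x)^{−2} · exp(s·φ(t,x)). Let s ≥ 2/c₃, let δ ≥ 0, and let T₀ ≤ t ≤ τ ≤ T and x ∈ ℝ² be such that θ(t) · |X̂(τ,t,x) − X̄(τ,t,x)| ≤ δ. Then ℵ(t,x) ≤ exp((s+2) · λ · K · exp(λ(6m+1)) · δ) · ℵ(τ, X̂(τ,t,x)). -/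
lemma exp_diff_le (a b M : ℝ) (hab : a ≤ b) (hbM : b ≤ M) :
    Real.exp b - Real.exp a ≤ Real.exp M * (b - a) := by
  have h1 : Real.exp (a - b) * Real.exp b = Real.exp a := by
    rw [← Real.exp_add]; ring_nf
  have h2 := Real.add_one_le_exp (a - b)
  have h3 : Real.exp b ≤ Real.exp M := Real.exp_le_exp.mpr hbM
  nlinarith [Real.exp_pos b, mul_le_mul_of_nonneg_right h2 (Real.exp_pos b).le]

lemma form_lemma (u r X : ℝ) :
    ((u * Real.exp r)^2)⁻¹ * Real.exp X = (u^2)⁻¹ * Real.exp (X - 2*r) := by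
  have h : (u * Real.exp r)^2 = u^2 * Real.exp (2*r) := by
    rw [mul_pow, sq (Real.exp r), ← Real.exp_add]; ring_nf
  rw [h, mul_inv, ← Real.exp_neg, mul_assoc, ← Real.exp_add]
  ring_nf



/-- The Carleman weight `ξ(t,x) = θ(t) e^{λψ(t,x)}`. -/
noncomputable def xiW (θ : ℝ → ℝ) (ψ : ℝ → EuclideanSpace ℝ (Fin 2) → ℝ) (lam t : ℝ)
    (x : EuclideanSpace ℝ (Fin 2)) : ℝ :=
  θ t * Real.exp (lam * ψ t x)

/-- The weight `ℵ(t,x) = ξ(t,x)^{-2} e^{s φ(t,x)}`. -/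
noncomputable def alephW (θ : ℝ → ℝ) (ψ : ℝ → EuclideanSpace ℝ (Fin 2) → ℝ) (m lam s t : ℝ)
    (x : EuclideanSpace ℝ (Fin 2)) : ℝ :=
  ((xiW θ ψ lam t x)^2)⁻¹ * Real.exp (s * phiW θ ψ m lam t x)

set_option maxHeartbeats 1000000 in
/-- The case `T₀ ≤ t ≤ τ` of Proposition 4.5 of the paper, with explicit constant:
for `s ≥ 2/c₃` (where `c₃ = λ e^{6λ(m+1)} − e^{λ(6m+1)}`),
`ℵ(t,x) ≤ e^{(s+2) λ K e^{λ(6m+1)} δ} ℵ(τ, X̂(τ,t,x))` whenever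
`θ(t) |X̂(τ,t,x) − X̄(τ,t,x)| ≤ δ`. -/

theorem stmt_9
    (T m lam K : ℝ) (hT : 0 < T) (hm : 1 ≤ m) (hlam : 1 ≤ lam) (hK : 0 ≤ K)
    (θ : ℝ → ℝ) (hθ1 : ∀ t ∈ Set.Icc (0:ℝ) T, 1 ≤ θ t)
    (ψ : ℝ → EuclideanSpace ℝ (Fin 2) → ℝ)
    (hψlb : ∀ t ∈ Set.Icc (0:ℝ) T, ∀ x, 6*m ≤ ψ t x)
    (hψub : ∀ t ∈ Set.Icc (0:ℝ) T, ∀ x, ψ t x ≤ 6*m + 1)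
    (hψlip : ∀ t ∈ Set.Icc (0:ℝ) T, ∀ x x', |ψ t x - ψ t x'| ≤ K * ‖x - x'‖)
    (Xbar Xhat : ℝ → ℝ → EuclideanSpace ℝ (Fin 2) → EuclideanSpace ℝ (Fin 2))
    (htransport : ∀ t ∈ Set.Icc (0:ℝ) T, ∀ τ ∈ Set.Icc (0:ℝ) T, ∀ x,
      ψ τ (Xbar τ t x) = ψ t x)
    (T₀ : ℝ) (hT₀0 : 0 ≤ T₀) (hT₀T : T₀ ≤ T)
    (hθmono : MonotoneOn θ (Set.Icc T₀ T))
    (s : ℝ)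
    (hs : 2 / (lam * Real.exp (6*lam*(m+1)) - Real.exp (lam*(6*m+1))) ≤ s)
    (δ : ℝ) (hδ : 0 ≤ δ)
    (t τ : ℝ) (hT₀t : T₀ ≤ t) (htτ : t ≤ τ) (hτT : τ ≤ T)
    (x : EuclideanSpace ℝ (Fin 2))
    (hclose : θ t * ‖Xhat τ t x - Xbar τ t x‖ ≤ δ) :
    alephW θ ψ m lam s t x
      ≤ Real.exp ((s+2) * lam * K * Real.exp (lam*(6*m+1)) * δ)
        * alephW θ ψ m lam s τ (Xhat τ t x) := by
  have ht0 : (0:ℝ) ≤ t := le_trans hT₀0 hT₀t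
  have htT : t ≤ T := le_trans htτ hτT
  have htI : t ∈ Set.Icc (0:ℝ) T := ⟨ht0, htT⟩
  have hτI : τ ∈ Set.Icc (0:ℝ) T := ⟨le_trans ht0 htτ, hτT⟩
  have hlam0 : (0:ℝ) ≤ lam := by linarith
  unfold alephW xiW phiW
  set xh := Xhat τ t x with hxh
  set xb := Xbar τ t x with hxb
  set p := ψ t x with hpdef
  set q := ψ τ xh with hqdef
  set u := θ t with hu
  set v := θ τ with hv
  set d := ‖xh - xb‖ with hddef
  set E := Real.exp (lam*(6*m+1)) with hEdef
  set A := lam * Real.exp (6*lam*(m+1)) with hAdef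
  -- basic facts
  have hu1 : 1 ≤ u := hθ1 t htI
  have hv1 : u ≤ v := hθmono ⟨hT₀t, htT⟩ ⟨le_trans hT₀t htτ, hτT⟩ htτ
  have hpub : p ≤ 6*m+1 := hψub t htI x
  have hqub : q ≤ 6*m+1 := hψub τ hτI xh
  have hd0 : 0 ≤ d := norm_nonneg _
  have hud : u * d ≤ δ := hclose
  have hdδ : d ≤ δ := by nlinarith [mul_nonneg (by linarith : (0:ℝ) ≤ u - 1) hd0]
  have hE1 : 1 ≤ E := Real.one_le_exp (by nlinarith)
  have hpq : |q - p| ≤ K * d := by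
    have h := hψlip τ hτI xh xb
    have h2 : ψ τ xb = p := htransport t htI τ hτI x
    rw [h2] at h
    exact h
  have hKd0 : 0 ≤ K * d := mul_nonneg hK hd0
  -- c₃ positivity and s bounds
  have hEA : E < A := by
    have h1 : Real.exp (lam*(6*m+1)) < Real.exp (6*lam*(m+1)) :=
      Real.exp_lt_exp.mpr (by nlinarith)
    have h2 : Real.exp (6*lam*(m+1)) ≤ lam * Real.exp (6*lam*(m+1)) :=
      le_mul_of_one_le_left (Real.exp_pos _).le hlam
    rw [hEdef, hAdef]; linarith
  have hc3pos : (0:ℝ) < A - E := by linarith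
  have hs0 : (0:ℝ) < s := lt_of_lt_of_le (div_pos two_pos hc3pos) hs
  have hsc3 : 2 ≤ s * (A - E) := by
    rw [div_le_iff₀ hc3pos] at hs; linarith
  set c := A - Real.exp (lam * q) with hcdef
  have hexpq : Real.exp (lam * q) ≤ E :=
    Real.exp_le_exp.mpr (mul_le_mul_of_nonneg_left hqub hlam0)
  have hcge : A - E ≤ c := by rw [hcdef]; linarith
  have hsc : 2 ≤ s * c := le_trans hsc3 (mul_le_mul_of_nonneg_left hcge hs0.le)
  -- exponential difference bound
  have hediff : Real.exp (lam*q) - Real.exp (lam*p) ≤ E * (lam * (K * d)) := by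
    rcases le_total p q with h | h
    · have hle : lam*p ≤ lam*q := mul_le_mul_of_nonneg_left h hlam0
      have hub2 : lam*q ≤ lam*(6*m+1) := mul_le_mul_of_nonneg_left hqub hlam0
      have hd := exp_diff_le (lam*p) (lam*q) (lam*(6*m+1)) hle hub2
      rw [← hEdef] at hd
      have hq1 : q - p ≤ K * d := le_trans (le_abs_self _) hpq
      calc Real.exp (lam*q) - Real.exp (lam*p) ≤ E * (lam*q - lam*p) := hd
        _ = E * (lam * (q - p)) := by ring
        _ ≤ E * (lam * (K * d)) := by
            apply mul_le_mul_of_nonneg_left _ (by linarith : (0:ℝ) ≤ E)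
            exact mul_le_mul_of_nonneg_left hq1 hlam0
    · have hle : lam*q ≤ lam*p := mul_le_mul_of_nonneg_left h hlam0
      have hexp : Real.exp (lam*q) ≤ Real.exp (lam*p) := Real.exp_le_exp.mpr hle
      calc Real.exp (lam*q) - Real.exp (lam*p) ≤ 0 := by linarith
        _ ≤ E * (lam * (K * d)) := by positivity
  have hqp : q - p ≤ K * d := le_trans (le_abs_self _) hpq
  -- exponents
  set B := (s+2) * lam * K * E * δ with hBdef
  -- Step 1 exponent inequality
  have h1 : s * (u * (A - Real.exp (lam*p))) - 2*(lam*p)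
      ≤ B + (s * (u * c) - 2*(lam*q)) := by
    rw [hcdef, hBdef]
    have hKdδ : K*d ≤ K*δ := mul_le_mul_of_nonneg_left hdδ hK
    have t1 : 2*lam*(q-p) ≤ 2*lam*(K*δ) :=
      mul_le_mul_of_nonneg_left (le_trans hqp hKdδ) (by linarith : (0:ℝ) ≤ 2*lam)
    have t1b : 2*lam*(K*δ) ≤ 2*lam*(K*(E*δ)) := by
      nlinarith [mul_nonneg (mul_nonneg (by linarith : (0:ℝ) ≤ 2*lam)
        (mul_nonneg hK hδ)) (by linarith : (0:ℝ) ≤ E - 1)]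
    have t2 : s * u * (Real.exp (lam*q) - Real.exp (lam*p)) ≤ s * (E * lam * K * (u*d)) := by
      have hsu : (0:ℝ) ≤ s * u := mul_nonneg hs0.le (by linarith)
      calc s * u * (Real.exp (lam*q) - Real.exp (lam*p))
          ≤ s * u * (E * (lam * (K * d))) := mul_le_mul_of_nonneg_left hediff hsu
        _ = s * (E * lam * K * (u*d)) := by ring
    have t3 : s * (E * lam * K * (u*d)) ≤ s * (E * lam * K * δ) := by
      apply mul_le_mul_of_nonneg_left _ hs0.le
      apply mul_le_mul_of_nonneg_left hud
      positivity
    ring_nf at t1 t1b t2 t3 ⊢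
    linarith
  -- Step 2: monotonicity in θ
  have hvu : v ≤ u * Real.exp (v - u) := by
    have h2 := Real.add_one_le_exp (v - u)
    nlinarith [mul_le_mul_of_nonneg_left h2 (by linarith : (0:ℝ) ≤ u),
      mul_nonneg (by linarith : (0:ℝ) ≤ u - 1) (by linarith : (0:ℝ) ≤ v - u)]
  have hstep2 : v^2 * Real.exp (s * (u * c)) ≤ u^2 * Real.exp (s * (v * c)) := by
    have hsq : v^2 ≤ u^2 * Real.exp (2*(v-u)) := by
      have e2 : Real.exp (2*(v-u)) = Real.exp (v-u) * Real.exp (v-u) := by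
        rw [← Real.exp_add]; ring_nf
      rw [e2]
      nlinarith [mul_self_le_mul_self (by linarith : (0:ℝ) ≤ v) hvu]
    have h2 : 2*(v-u) + s*(u*c) ≤ s*(v*c) := by
      nlinarith [mul_nonneg (sub_nonneg.mpr hv1) (by linarith : (0:ℝ) ≤ s*c - 2)]
    calc v^2 * Real.exp (s*(u*c))
        ≤ (u^2 * Real.exp (2*(v-u))) * Real.exp (s*(u*c)) :=
          mul_le_mul_of_nonneg_right hsq (Real.exp_pos _).le
      _ = u^2 * Real.exp (2*(v-u) + s*(u*c)) := by rw [mul_assoc, ← Real.exp_add]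
      _ ≤ u^2 * Real.exp (s*(v*c)) :=
          mul_le_mul_of_nonneg_left (Real.exp_le_exp.mpr h2) (sq_nonneg u)
  -- put everything together
  rw [form_lemma u (lam*p), form_lemma v (lam*q)]
  have hu2 : (0:ℝ) < u^2 := pow_pos (by linarith) 2
  have hv2 : (0:ℝ) < v^2 := pow_pos (by linarith) 2
  set X := s * (u * (A - Real.exp (lam*p))) - 2*(lam*p) with hX
  set Y := s * (v * (A - Real.exp (lam*q))) - 2*(lam*q) with hY
  have hgoal' : Real.exp X * v^2 ≤ (Real.exp B * Real.exp Y) * u^2 := by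
    calc Real.exp X * v^2
        ≤ Real.exp (B + (s * (u * c) - 2*(lam*q))) * v^2 :=
          mul_le_mul_of_nonneg_right (Real.exp_le_exp.mpr h1) (sq_nonneg v)
      _ = Real.exp B * (Real.exp (-(2*(lam*q))) * (v^2 * Real.exp (s * (u * c)))) := by
          rw [Real.exp_add, Real.exp_sub, Real.exp_neg]; ring
      _ ≤ Real.exp B * (Real.exp (-(2*(lam*q))) * (u^2 * Real.exp (s * (v * c)))) := by
          apply mul_le_mul_of_nonneg_left _ (Real.exp_pos B).le
          exact mul_le_mul_of_nonneg_left hstep2 (Real.exp_pos _).le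
      _ = (Real.exp B * Real.exp Y) * u^2 := by
          rw [hY, hcdef, Real.exp_sub, Real.exp_neg]; ring
  have heq : Real.exp B * ((v^2)⁻¹ * Real.exp Y) = (Real.exp B * Real.exp Y) / v^2 := by
    ring
  have hgoal : (u^2)⁻¹ * Real.exp X ≤ Real.exp B * ((v^2)⁻¹ * Real.exp Y) := by
    rw [heq, inv_mul_eq_div, div_le_div_iff₀ hu2 hv2]
    exact hgoal'
  exact hgoal
end

section
/- Let ψ : ℝ² → ℝ be twice continuously differentiable, let x ∈ ℝ², and let α > 0, K ≥ 0 be such that |∇ψ(x)| ≥ α and the operator norm of the second derivative D²ψ(x) is at most K. Then for all real s > 0, c > 0 and all λ ≥ 8K/α², for every η ∈ ℝ²: 2sλ²·c·⟨∇ψ(x),η⟩² + sλ²·c·|∇ψ(x)|²·|η|² + 2sλ·c·D²ψ(x)(η,η) − sλ·c·Δψ(x)·|η|² ≥ (sλ²α²/2)·c·|η|². -/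
open RealInnerProductSpace

/-- Second derivative of `f` at `x` as a bilinear form, evaluated at `(η, η')`. -/
noncomputable def D2 (f : EuclideanSpace ℝ (Fin 2) → ℝ) (x η η' : EuclideanSpace ℝ (Fin 2)) : ℝ :=
  iteratedFDeriv ℝ 2 f x ![η, η']

/-- Laplacian of `f` at `x`: the trace of the second derivative. -/
noncomputable def lapl (f : EuclideanSpace ℝ (Fin 2) → ℝ) (x : EuclideanSpace ℝ (Fin 2)) : ℝ :=
  ∑ i : Fin 2, D2 f x (EuclideanSpace.single i 1) (EuclideanSpace.single i 1)

/-- The pointwise lower bound (A.18) in the proof of the Carleman estimate (Theorem A.1),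
valid away from the set where `∇ψ` vanishes, with explicit constants. -/
theorem stmt_12
    (ψ : EuclideanSpace ℝ (Fin 2) → ℝ) (hψ : ContDiff ℝ 2 ψ)
    (x : EuclideanSpace ℝ (Fin 2)) (α K : ℝ) (hα : 0 < α) (hK : 0 ≤ K)
    (hgrad : α ≤ ‖gradient ψ x‖) (hD2 : ‖iteratedFDeriv ℝ 2 ψ x‖ ≤ K)
    (s c lam : ℝ) (hs : 0 < s) (hc : 0 < c) (hlam : 8*K/α^2 ≤ lam) :
    ∀ η : EuclideanSpace ℝ (Fin 2),
      (s*lam^2*α^2/2)*c*‖η‖^2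
        ≤ 2*s*lam^2*c*(⟪gradient ψ x, η⟫)^2 + s*lam^2*c*‖gradient ψ x‖^2*‖η‖^2
          + 2*s*lam*c*(D2 ψ x η η) - s*lam*c*(lapl ψ x)*‖η‖^2 := by
  intro η
  have hα2 : (0:ℝ) < α^2 := by positivity
  have hlam0 : 0 ≤ lam := le_trans (by positivity) hlam
  have hlamα : 8*K ≤ lam * α^2 := by
    have := (div_le_iff₀ hα2).mp hlam
    linarith
  have hbound : ∀ u v : EuclideanSpace ℝ (Fin 2), |D2 ψ x u v| ≤ K * (‖u‖ * ‖v‖) := by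
    intro u v
    have h1 := (iteratedFDeriv ℝ 2 ψ x).le_opNorm ![u, v]
    have h2 : ∏ i, ‖(![u, v]) i‖ = ‖u‖ * ‖v‖ := by
      simp [Fin.prod_univ_two]
    rw [h2] at h1
    have h3 : |D2 ψ x u v| = ‖iteratedFDeriv ℝ 2 ψ x ![u, v]‖ := by
      rw [D2, Real.norm_eq_abs]
    rw [h3]
    calc ‖iteratedFDeriv ℝ 2 ψ x ![u, v]‖ ≤ ‖iteratedFDeriv ℝ 2 ψ x‖ * (‖u‖ * ‖v‖) := h1
      _ ≤ K * (‖u‖ * ‖v‖) := by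
          apply mul_le_mul_of_nonneg_right hD2 (by positivity)
  have hD2η : -(K * ‖η‖^2) ≤ D2 ψ x η η := by
    have := hbound η η
    have := abs_le.mp this
    nlinarith [this.1]
  have hlap : lapl ψ x ≤ 2*K := by
    have h0 := hbound (EuclideanSpace.single 0 (1:ℝ)) (EuclideanSpace.single 0 1)
    have h1 := hbound (EuclideanSpace.single 1 (1:ℝ)) (EuclideanSpace.single 1 1)
    simp [EuclideanSpace.norm_single] at h0 h1
    have heq : lapl ψ x = D2 ψ x (EuclideanSpace.single 0 1) (EuclideanSpace.single 0 1)
        + D2 ψ x (EuclideanSpace.single 1 1) (EuclideanSpace.single 1 1) := by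
      rw [lapl, Fin.sum_univ_two]
    have a0 := (abs_le.mp h0).2
    have a1 := (abs_le.mp h1).2
    rw [heq]; linarith
  have hg : α^2 ≤ ‖gradient ψ x‖^2 := by nlinarith [norm_nonneg (gradient ψ x)]
  have hn : (0:ℝ) ≤ ‖η‖^2 := sq_nonneg _
  have hscl : (0:ℝ) ≤ s*c*lam := by positivity
  have h1 : (0:ℝ) ≤ s*c*lam^2*‖η‖^2 * (‖gradient ψ x‖^2 - α^2) := by
    apply mul_nonneg (by positivity) (by linarith)
  have h2 : (0:ℝ) ≤ s*c*lam^2*(⟪gradient ψ x, η⟫)^2 := by positivity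
  have h3 : s*c*lam * (-(K * ‖η‖^2)) ≤ s*c*lam * D2 ψ x η η :=
    mul_le_mul_of_nonneg_left hD2η hscl
  have h4 : s*c*lam*‖η‖^2 * lapl ψ x ≤ s*c*lam*‖η‖^2 * (2*K) :=
    mul_le_mul_of_nonneg_left hlap (by positivity)
  have h5 : (0:ℝ) ≤ s*c*lam*‖η‖^2 * (lam*α^2 - 8*K) := by
    apply mul_nonneg (by positivity) (by linarith)
  nlinarith [h1, h2, h3, h4, h5]
end

section
/- Let T₀ > 0, m ≥ 1, s ≥ 1, λ ≥ 1 and P ≥ 0 be real numbers satisfying s·λ²·exp(λ(6m+1)) ≥ 8·T₀·P, and set μ := s·λ²·exp(λ(6m−4)). Then for all real a with 6m ≤ a ≤ 6m+1 and all real b with |b| ≤ P: (μ/T₀)·(λ·exp(6λ(m+1)) − exp(λa)) + 2·λ·b·exp(λa) ≥ (1/(2T₀))·s·λ³·exp(λ(12m+2)). -/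
/-- The coefficient positivity at time `t = 0` (estimate (A.14)) in the proof of the
Carleman estimate for the heat equation (Theorem A.1), with `μ = s λ² e^{λ(6m−4)}`,
`a = ψ(0,x) ∈ [6m, 6m+1]` and `|b| = |∂_t ψ(0,x)| ≤ P`. -/
theorem stmt_19
    (T₀ m s lam P : ℝ) (hT₀ : 0 < T₀) (hm : 1 ≤ m) (hs : 1 ≤ s) (hlam : 1 ≤ lam)
    (hP : 0 ≤ P)
    (hcond : 8 * T₀ * P ≤ s * lam^2 * Real.exp (lam*(6*m+1)))
    (a b : ℝ) (ha1 : 6*m ≤ a) (ha2 : a ≤ 6*m + 1) (hb : |b| ≤ P) :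
    (1/(2*T₀)) * s * lam^3 * Real.exp (lam*(12*m+2))
      ≤ (s * lam^2 * Real.exp (lam*(6*m-4)) / T₀)
          * (lam * Real.exp (6*lam*(m+1)) - Real.exp (lam*a))
        + 2 * lam * b * Real.exp (lam*a) := by
  set Ea := Real.exp (lam*a) with hEa
  set E1 := Real.exp (lam*(6*m-4)) with hE1
  set E6 := Real.exp (6*lam*(m+1)) with hE6
  set E12 := Real.exp (lam*(12*m+2)) with hE12
  set E61 := Real.exp (lam*(6*m+1)) with hE61
  have hlam0 : (0:ℝ) < lam := by linarith
  have hEa_pos : 0 < Ea := Real.exp_pos _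
  have hE1_pos : 0 < E1 := Real.exp_pos _
  have hE61_pos : 0 < E61 := Real.exp_pos _
  have hE12_pos : 0 < E12 := Real.exp_pos _
  have hEaE : Ea ≤ E61 := by
    apply Real.exp_le_exp.2
    nlinarith
  have h2 : E1 * E6 = E12 := by
    rw [hE1, hE6, hE12, ← Real.exp_add]; ring_nf
  have h6 : E61 * E61 = E12 := by
    rw [hE61, hE12, ← Real.exp_add]; ring_nf
  have h5 : (4:ℝ) ≤ Real.exp (5*lam) := by
    have : 5*lam + 1 ≤ Real.exp (5*lam) := Real.add_one_le_exp (5*lam)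
    linarith
  have h3 : 4 * (E1 * E61) ≤ E12 := by
    have heq : E1 * E61 * Real.exp (5*lam) = E12 := by
      rw [hE1, hE61, hE12, ← Real.exp_add, ← Real.exp_add]; ring_nf
    nlinarith [mul_pos hE1_pos hE61_pos]
  have hbP : -P ≤ b := neg_le_of_abs_le hb
  have hs0 : (0:ℝ) ≤ s := by linarith
  have hsl2 : (0:ℝ) ≤ s * lam^2 * E1 :=
    mul_nonneg (mul_nonneg hs0 (sq_nonneg lam)) hE1_pos.le
  have hc4 : (0:ℝ) ≤ (1/4) * s * lam^2 :=
    mul_nonneg (mul_nonneg (by norm_num) hs0) (sq_nonneg lam)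
  -- main inequality multiplied through by T₀
  have key : (1/2) * s * lam^3 * E12
      ≤ s * lam^2 * E1 * (lam * E6 - Ea) + T₀ * (2 * lam * b * Ea) := by
    have t1 : s * lam^2 * E1 * (lam * E6) = s * lam^3 * E12 := by
      rw [← h2]; ring
    have t2 : s * lam^2 * E1 * Ea ≤ (1/4) * s * lam^3 * E12 := by
      have hA := mul_le_mul_of_nonneg_left hEaE hsl2
      have hB := mul_le_mul_of_nonneg_left h3 hc4
      have hl23 : lam^2 ≤ lam^3 := by
        nlinarith [mul_nonneg (sq_nonneg lam) (show (0:ℝ) ≤ lam - 1 by linarith)]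
      have hC := mul_le_mul_of_nonneg_left hl23
        (mul_nonneg (mul_nonneg (show (0:ℝ) ≤ 1/4 by norm_num) hs0) hE12_pos.le)
      linarith [hA, hB, hC]
    have t3 : -((1/4) * s * lam^3 * E12) ≤ T₀ * (2 * lam * b * Ea) := by
      have hc : (0:ℝ) ≤ 2 * T₀ * lam := by positivity
      have hb1 := mul_le_mul_of_nonneg_left
        (mul_le_mul_of_nonneg_right hbP hEa_pos.le) hc
      have hb2 := mul_le_mul_of_nonneg_left
        (mul_le_mul_of_nonneg_left hEaE hP) hc
      have h8' := mul_le_mul_of_nonneg_right hcond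
        (mul_nonneg hlam0.le hE61_pos.le)
      have h6' : s * lam^3 * (E61 * E61) = s * lam^3 * E12 := by rw [h6]
      linarith [hb1, hb2, h8', h6']
    linarith [t1, t2, t3]
  calc (1/(2*T₀)) * s * lam^3 * E12
      = ((1/2) * s * lam^3 * E12) / T₀ := by field_simp
    _ ≤ (s * lam^2 * E1 * (lam * E6 - Ea) + T₀ * (2 * lam * b * Ea)) / T₀ := by
        gcongr
    _ = (s * lam^2 * E1 / T₀) * (lam * E6 - Ea) + 2 * lam * b * Ea := by
        field_simp
end
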